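/- arXiv:math/0111211 — 5 statements merged into one kernel-verified Lean document; each statement's English description precedes it below -/
import Mathlib

section
/- Let ℓ : ℕ → ℝ with ℓ(n) > 0 for all n, and suppose ∑_n ∑_{k≥0} e^{−(1+k)ℓ(n)} < ∞. Then the product Z(1) = ∏_n ∏_{k≥0} (1 − e^{−(1+k)ℓ(n)}) converges to a value in (0,1]; in particular −log Z(1) ≥ 0. Moreover, for every R > 0, if −log Z(1) ≤ R then ℓ(n) ≥ −(1/2)·log(1 − e^{−R}) for every n. -/
/-- If `ℓ(n) > 0` for all `n` and `∑∑ e^{−(1+k)ℓ(n)} < ∞`, then the product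
`Z(1) = ∏∏ (1 − e^{−(1+k)ℓ(n)})` converges to a value in `(0,1]` (so `−log Z(1) ≥ 0`),
and for every `R > 0`, `−log Z(1) ≤ R` implies `ℓ(n) ≥ −½ log(1 − e^{−R})` for all `n`. -/
theorem stmt3 (ℓ : ℕ → ℝ) (hpos : ∀ n, 0 < ℓ n)
    (hsum : Summable fun p : ℕ × ℕ => Real.exp (-(1 + (p.2 : ℝ)) * ℓ p.1)) :
    Multipliable (fun p : ℕ × ℕ => 1 - Real.exp (-(1 + (p.2 : ℝ)) * ℓ p.1)) ∧
    (∏' p : ℕ × ℕ, (1 - Real.exp (-(1 + (p.2 : ℝ)) * ℓ p.1))) ∈ Set.Ioc (0 : ℝ) 1 ∧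
    (0 ≤ -Real.log (∏' p : ℕ × ℕ, (1 - Real.exp (-(1 + (p.2 : ℝ)) * ℓ p.1)))) ∧
    ∀ R : ℝ, 0 < R →
      -Real.log (∏' p : ℕ × ℕ, (1 - Real.exp (-(1 + (p.2 : ℝ)) * ℓ p.1))) ≤ R →
      ∀ n, -(1 / 2) * Real.log (1 - Real.exp (-R)) ≤ ℓ n := by
  set f : ℕ × ℕ → ℝ := fun p => Real.exp (-(1 + (p.2 : ℝ)) * ℓ p.1) with hf
  have hf01 : ∀ p, 0 < f p ∧ f p < 1 := by
    intro p
    refine ⟨Real.exp_pos _, ?_⟩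
    rw [hf]
    have : -(1 + (p.2 : ℝ)) * ℓ p.1 < 0 := by
      have h1 : (0:ℝ) < 1 + (p.2 : ℝ) := by positivity
      nlinarith [hpos p.1]
    simpa using Real.exp_lt_one_iff.mpr this
  have hpos1 : ∀ p, 0 < 1 - f p := fun p => by linarith [(hf01 p).2]
  -- the key log bound: for 0 < x < 1, -log (1-x) ≤ x / (1-x)
  have hlogb : ∀ p, -Real.log (1 - f p) ≤ f p / (1 - f p) := by
    intro p
    have hne : (1 : ℝ) - f p ≠ 0 := ne_of_gt (hpos1 p)
    have h := Real.log_le_sub_one_of_pos (x := (1 - f p)⁻¹) (inv_pos.mpr (hpos1 p))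
    rw [Real.log_inv] at h
    have : (1 - f p)⁻¹ - 1 = f p / (1 - f p) := by
      field_simp
      ring
    linarith [this ▸ h]
  -- summability of the logs
  have hlogsum : Summable fun p => Real.log (1 - f p) := by
    apply Summable.of_norm_bounded_eventually (hsum.mul_left 2)
    have hcof : Filter.Tendsto f Filter.cofinite (nhds 0) := hsum.tendsto_cofinite_zero
    have : ∀ᶠ p in Filter.cofinite, f p < 1/2 :=
      hcof.eventually (eventually_lt_nhds (by norm_num : (0:ℝ) < 1/2))
    filter_upwards [this] with p hp
    have h1 := hlogb p
    have h2 : Real.log (1 - f p) ≤ 0 :=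
      Real.log_nonpos (by linarith [hpos1 p]) (by linarith [(hf01 p).1])
    have h3 : f p / (1 - f p) ≤ 2 * f p := by
      rw [div_le_iff₀ (hpos1 p)]
      nlinarith [(hf01 p).1]
    rw [Real.norm_eq_abs, abs_of_nonpos h2]
    linarith
  have hmul : Multipliable (fun p : ℕ × ℕ => 1 - f p) :=
    Real.multipliable_of_summable_log hpos1 hlogsum
  have hZ : Real.exp (∑' p, Real.log (1 - f p)) = ∏' p, (1 - f p) := by
    exact Real.rexp_tsum_eq_tprod hpos1 hlogsum
  set S := ∑' p, Real.log (1 - f p) with hS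
  have hSnonpos : S ≤ 0 :=
    tsum_nonpos fun p => Real.log_nonpos (by linarith [hpos1 p]) (by linarith [(hf01 p).1])
  have hZpos : 0 < ∏' p, (1 - f p) := hZ ▸ Real.exp_pos S
  have hZle1 : (∏' p, (1 - f p)) ≤ 1 := by
    rw [← hZ]; simpa using Real.exp_le_exp.mpr hSnonpos
  have hlogZ : Real.log (∏' p, (1 - f p)) = S := by rw [← hZ, Real.log_exp]
  refine ⟨hmul, ⟨hZpos, hZle1⟩, by rw [hlogZ]; linarith, ?_⟩
  intro R hR hRle n
  rw [hlogZ] at hRle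
  -- single-term bound: -log(1 - f(n,0)) ≤ -S
  have hterm : -Real.log (1 - f (n, 0)) ≤ -S := by
    have : S = -∑' p, -Real.log (1 - f p) := by
      rw [tsum_neg]; ring
    rw [this, neg_neg]
    exact Summable.le_tsum hlogsum.neg (n, 0) fun p _ => by
      simpa using Real.log_nonpos (by linarith [hpos1 p]) (by linarith [(hf01 p).1])
  have hlogn : -Real.log (1 - f (n, 0)) ≤ R := le_trans hterm hRle
  -- so 1 - f(n,0) ≥ exp(-R)
  have h1 : Real.exp (-R) ≤ 1 - f (n, 0) := by
    calc Real.exp (-R) ≤ Real.exp (Real.log (1 - f (n, 0))) :=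
          Real.exp_le_exp.mpr (by linarith)
      _ = 1 - f (n, 0) := Real.exp_log (hpos1 _)
  have hfval : f (n, 0) = Real.exp (-ℓ n) := by simp [hf]
  have h2 : Real.exp (-ℓ n) ≤ 1 - Real.exp (-R) := by
    rw [← hfval]; linarith
  have h3 : -ℓ n ≤ Real.log (1 - Real.exp (-R)) := by
    have := Real.log_le_log (Real.exp_pos (-ℓ n)) h2
    rwa [Real.log_exp] at this
  have h4 : Real.log (1 - Real.exp (-R)) ≤ 0 :=
    Real.log_nonpos (by linarith [Real.exp_pos (-R), h2, Real.exp_pos (-ℓ n)])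
      (by linarith [Real.exp_pos (-R)])
  linarith
end

section
/- Let ζ : ℕ → ℂ with ζ(n) ≠ 0 for all n and #{n : |ζ(n)| ≤ r} ≤ C(1+r²) for all r ≥ 0, and let P(s) = ∏_n (1 − s/ζ(n))·exp(s/ζ(n) + s²/(2ζ(n)²)) be the associated genus-two canonical product. Then there exists C′ > 0 such that |P(s)| ≤ exp(C′·(1 + |s|²·log(2+|s|))) for all s ∈ ℂ. -/
open Complex Finset Filter

private lemma auxL {z : ℂ} (hz : ‖z‖ ≤ 1/2) :
    ‖Complex.log (1 - z) + (z + z ^ 2 / 2)‖ ≤ (2/3) * ‖z‖ ^ 3 := by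
  have h1 : ‖(-z)‖ < 1 := by rw [norm_neg]; linarith
  have h2 := Complex.norm_log_sub_logTaylor_le 2 h1
  have h3 : logTaylor 3 (-z) = -z - z ^ 2 / 2 := by
    simp [logTaylor, Finset.sum_range_succ]
    ring
  rw [h3] at h2
  have h4 : Complex.log (1 + -z) - (-z - z ^ 2 / 2) = Complex.log (1 - z) + (z + z ^ 2 / 2) := by
    rw [sub_eq_add_neg 1 z]; ring
  rw [h4, norm_neg] at h2
  have h5 : (1 - ‖z‖)⁻¹ ≤ 2 := by
    rw [inv_le_comm₀ (by linarith) (by norm_num)]; linarith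
  have h6 : (0:ℝ) ≤ ‖z‖ ^ 3 := by positivity
  calc ‖Complex.log (1 - z) + (z + z ^ 2 / 2)‖ ≤ ‖z‖ ^ (2+1) * (1 - ‖z‖)⁻¹ / (2+1) := h2
    _ ≤ (2/3) * ‖z‖ ^ 3 := by nlinarith


private lemma aux_ne {z : ℂ} (hz : ‖z‖ ≤ 1/2) : (1 : ℂ) - z ≠ 0 := by
  intro h
  have h1 : ‖(1:ℂ)‖ - ‖z‖ ≤ ‖(1:ℂ) - z‖ := norm_sub_norm_le 1 z
  rw [h, norm_zero, norm_one] at h1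
  linarith

private lemma aux_exp_eq {z : ℂ} (hz : ‖z‖ ≤ 1/2) :
    (1 - z) * Complex.exp (z + z ^ 2 / 2)
      = Complex.exp (Complex.log (1 - z) + (z + z ^ 2 / 2)) := by
  rw [Complex.exp_add (Complex.log (1 - z)), Complex.exp_log (aux_ne hz)]

private lemma aux_cube_le {z : ℂ} (hz : ‖z‖ ≤ 1/2) : ‖z‖ ^ 3 ≤ 1/8 := by
  have h0 : (0:ℝ) ≤ ‖z‖ := norm_nonneg z
  have : ‖z‖ ^ 3 ≤ (1/2:ℝ) ^ 3 := pow_le_pow_left₀ h0 hz 3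
  norm_num at this ⊢
  linarith

private lemma aux_cubic {z : ℂ} (hz : ‖z‖ ≤ 1/2) :
    ‖(1 - z) * Complex.exp (z + z ^ 2 / 2)‖ ≤ Real.exp (2 * ‖z‖ ^ 3) := by
  rw [aux_exp_eq hz, Complex.norm_exp]
  apply Real.exp_le_exp.2
  have h1 := Complex.re_le_norm (Complex.log (1 - z) + (z + z ^ 2 / 2))
  have h2 := auxL hz
  have h3 : (0:ℝ) ≤ ‖z‖ ^ 3 := by positivity
  linarith

private lemma aux_quad (z : ℂ) :
    ‖(1 - z) * Complex.exp (z + z ^ 2 / 2)‖ ≤ Real.exp (5 * ‖z‖ ^ 2) := by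
  have h0 : (0:ℝ) ≤ ‖z‖ := norm_nonneg z
  by_cases hz : ‖z‖ ≤ 1/2
  · refine (aux_cubic hz).trans (Real.exp_le_exp.2 ?_)
    nlinarith
  · push_neg at hz
    rw [norm_mul, Complex.norm_exp]
    have h1 : ‖(1:ℂ) - z‖ ≤ Real.exp ‖z‖ := by
      have ha : ‖(1:ℂ) - z‖ ≤ 1 + ‖z‖ := by
        calc ‖(1:ℂ) - z‖ ≤ ‖(1:ℂ)‖ + ‖z‖ := norm_sub_le 1 z
          _ = 1 + ‖z‖ := by rw [norm_one]
      have hb : ‖z‖ + 1 ≤ Real.exp ‖z‖ := Real.add_one_le_exp ‖z‖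
      linarith
    have h2 : (z + z ^ 2 / 2).re ≤ ‖z‖ + ‖z‖ ^ 2 / 2 := by
      refine (Complex.re_le_norm _).trans ?_
      have : ‖z + z ^ 2 / 2‖ ≤ ‖z‖ + ‖z ^ 2 / 2‖ := norm_add_le _ _
      have h4 : ‖z ^ 2 / 2‖ = ‖z‖ ^ 2 / 2 := by
        rw [norm_div, norm_pow]
        norm_num
      linarith
    have h5 : Real.exp ((z + z ^ 2 / 2).re) ≤ Real.exp (‖z‖ + ‖z‖ ^ 2 / 2) :=
      Real.exp_le_exp.2 h2
    have h6 : ‖(1:ℂ) - z‖ * Real.exp ((z + z ^ 2 / 2).re)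
        ≤ Real.exp ‖z‖ * Real.exp (‖z‖ + ‖z‖ ^ 2 / 2) :=
      mul_le_mul h1 h5 (Real.exp_nonneg _) (Real.exp_nonneg _)
    rw [← Real.exp_add] at h6
    refine h6.trans (Real.exp_le_exp.2 ?_)
    nlinarith

private lemma aux_sub_one {z : ℂ} (hz : ‖z‖ ≤ 1/2) :
    ‖(1 - z) * Complex.exp (z + z ^ 2 / 2) - 1‖ ≤ 2 * ‖z‖ ^ 3 := by
  have hL := auxL hz
  have h3 := aux_cube_le hz
  have h0 : (0:ℝ) ≤ ‖z‖ ^ 3 := by positivity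
  have habs : ‖Complex.log (1 - z) + (z + z ^ 2 / 2)‖ ≤ 1 := by
    linarith
  have := Complex.norm_exp_sub_one_le habs
  rw [aux_exp_eq hz] at *
  linarith

private lemma aux_log_bound {z : ℂ} (hz : ‖z‖ ≤ 1/2) :
    ‖Complex.log ((1 - z) * Complex.exp (z + z ^ 2 / 2))‖ ≤ 2 * ‖z‖ ^ 3 := by
  have hL := auxL hz
  have h0 : (0:ℝ) ≤ ‖z‖ ^ 3 := by positivity
  have hz3 := aux_cube_le hz
  have him : |(Complex.log (1 - z) + (z + z ^ 2 / 2)).im| ≤ 2/3 * ‖z‖ ^ 3 := by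
    refine (Complex.abs_im_le_norm _).trans ?_
    exact hL
  obtain ⟨h1, h2⟩ := abs_le.1 him
  have hpi := Real.pi_gt_three
  rw [aux_exp_eq hz, Complex.log_exp (by linarith) (by linarith)]
  linarith

private lemma geom_bound (v : Finset ℕ) (c : ℝ) (hc : 0 < c)
    (h : ∀ k ∈ v, c ≤ (2:ℝ) ^ k) : ∑ k ∈ v, ((2:ℝ) ^ k)⁻¹ ≤ 2 / c := by
  rcases v.eq_empty_or_nonempty with rfl | hv
  · simp; positivity
  · set k₀ := v.min' hv with hk₀
    set N := v.max' hv + 1 with hN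
    have hsub : v ⊆ Finset.Ico k₀ N := by
      intro k hk
      rw [Finset.mem_Ico]
      exact ⟨v.min'_le k hk, Nat.lt_succ_of_le (v.le_max' k hk)⟩
    have h1 : ∑ k ∈ v, ((2:ℝ) ^ k)⁻¹ ≤ ∑ k ∈ Finset.Ico k₀ N, ((2:ℝ) ^ k)⁻¹ :=
      Finset.sum_le_sum_of_subset_of_nonneg hsub (fun i _ _ => by positivity)
    have h2 : ∑ k ∈ Finset.Ico k₀ N, ((2:ℝ) ^ k)⁻¹ = ∑ k ∈ Finset.Ico k₀ N, ((2:ℝ)⁻¹) ^ k :=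
      Finset.sum_congr rfl fun k _ => by rw [inv_pow]
    have hmn : k₀ ≤ N := le_of_lt (Nat.lt_succ_of_le (v.le_max' k₀ (v.min'_mem hv)))
    have h3 := geom_sum_Ico (x := (2:ℝ)⁻¹) (by norm_num) hmn
    have h4 : (0:ℝ) ≤ ((2:ℝ)⁻¹) ^ N := by positivity
    have h5 : ((2:ℝ)⁻¹) ^ k₀ ≤ c⁻¹ := by
      rw [inv_pow]
      exact inv_anti₀ hc (h k₀ (v.min'_mem hv))
    calc ∑ k ∈ v, ((2:ℝ) ^ k)⁻¹ ≤ ∑ k ∈ Finset.Ico k₀ N, ((2:ℝ)⁻¹) ^ k := h1.trans_eq h2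
      _ = (((2:ℝ)⁻¹) ^ N - ((2:ℝ)⁻¹) ^ k₀) / ((2:ℝ)⁻¹ - 1) := h3
      _ = 2 * (((2:ℝ)⁻¹) ^ k₀ - ((2:ℝ)⁻¹) ^ N) := by
          field_simp
          ring
      _ ≤ 2 * c⁻¹ := by linarith
      _ = 2 / c := by rw [div_eq_mul_inv]

section counting

variable (ζ : ℕ → ℂ) (C : ℝ) (hC : 0 < C)
    (hcount : ∀ r : ℝ, 0 ≤ r → {n : ℕ | ‖ζ n‖ ≤ r}.Finite ∧
      ({n : ℕ | ‖ζ n‖ ≤ r}.ncard : ℝ) ≤ C * (1 + r ^ 2))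

-- basic dyadic facts
private lemma dy_lower {n : ℕ} (h1 : 1 ≤ ‖ζ n‖) : (2:ℝ) ^ (Nat.log 2 ⌊‖ζ n‖⌋₊) ≤ ‖ζ n‖ := by
  have hfl : ⌊‖ζ n‖⌋₊ ≠ 0 := by
    have : 0 < ⌊‖ζ n‖⌋₊ := Nat.floor_pos.2 h1
    omega
  have h2 : (2:ℕ) ^ (Nat.log 2 ⌊‖ζ n‖⌋₊) ≤ ⌊‖ζ n‖⌋₊ := Nat.pow_log_le_self 2 hfl
  calc (2:ℝ) ^ (Nat.log 2 ⌊‖ζ n‖⌋₊) = ((2 ^ (Nat.log 2 ⌊‖ζ n‖⌋₊) : ℕ) : ℝ) := by push_cast; ring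
    _ ≤ (⌊‖ζ n‖⌋₊ : ℝ) := by exact_mod_cast h2
    _ ≤ ‖ζ n‖ := Nat.floor_le (norm_nonneg _)

private lemma dy_upper (n : ℕ) : ‖ζ n‖ < (2:ℝ) ^ (Nat.log 2 ⌊‖ζ n‖⌋₊ + 1) := by
  have h2 : ⌊‖ζ n‖⌋₊ < 2 ^ (Nat.log 2 ⌊‖ζ n‖⌋₊ + 1) := Nat.lt_pow_succ_log_self one_lt_two _
  have h3 : (⌊‖ζ n‖⌋₊ : ℝ) + 1 ≤ ((2 ^ (Nat.log 2 ⌊‖ζ n‖⌋₊ + 1) : ℕ) : ℝ) := by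
    exact_mod_cast Nat.succ_le_of_lt h2
  have h4 := Nat.lt_floor_add_one ‖ζ n‖
  calc ‖ζ n‖ < (⌊‖ζ n‖⌋₊ : ℝ) + 1 := h4
    _ ≤ ((2 ^ (Nat.log 2 ⌊‖ζ n‖⌋₊ + 1) : ℕ) : ℝ) := h3
    _ = (2:ℝ) ^ (Nat.log 2 ⌊‖ζ n‖⌋₊ + 1) := by push_cast; ring

include hC hcount in
private lemma slice_card (u : Finset ℕ) (k : ℕ) :
    (((u.filter fun n => Nat.log 2 ⌊‖ζ n‖⌋₊ = k ∧ 1 ≤ ‖ζ n‖).card : ℕ) : ℝ)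
      ≤ 5 * C * 4 ^ k := by
  have h2 : (0:ℝ) ≤ 2 ^ (k + 1) := by positivity
  obtain ⟨hfin, hcard⟩ := hcount (2 ^ (k + 1)) h2
  have hsub : (u.filter fun n => Nat.log 2 ⌊‖ζ n‖⌋₊ = k ∧ 1 ≤ ‖ζ n‖) ⊆ hfin.toFinset := by
    intro n hn
    rw [Finset.mem_filter] at hn
    obtain ⟨-, hk, h1⟩ := hn
    rw [Set.Finite.mem_toFinset]
    show ‖ζ n‖ ≤ 2 ^ (k + 1)
    have := dy_upper ζ n
    rw [hk] at this
    exact this.le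
  have hcc : ((u.filter fun n => Nat.log 2 ⌊‖ζ n‖⌋₊ = k ∧ 1 ≤ ‖ζ n‖).card : ℝ)
      ≤ (hfin.toFinset.card : ℝ) := by exact_mod_cast Finset.card_le_card hsub
  have hnc : ({n : ℕ | ‖ζ n‖ ≤ 2 ^ (k+1)}.ncard : ℝ) = (hfin.toFinset.card : ℝ) := by
    rw [Set.ncard_eq_toFinset_card _ hfin]
  rw [hnc] at hcard
  have h4 : (1:ℝ) ≤ 4 ^ k := one_le_pow₀ (by norm_num)
  have h5 : ((2:ℝ) ^ (k+1)) ^ 2 = 4 ^ (k+1) := by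
    rw [← pow_mul, mul_comm, pow_mul]
    norm_num
  have h6 : C * (1 + ((2:ℝ) ^ (k+1)) ^ 2) ≤ 5 * C * 4 ^ k := by
    rw [h5, pow_succ]
    nlinarith
  exact hcc.trans (hcard.trans h6)


include hC hcount in
private lemma slice_sum (j : ℕ) (u : Finset ℕ) (k : ℕ) :
    ∑ n ∈ u.filter (fun n => Nat.log 2 ⌊‖ζ n‖⌋₊ = k ∧ 1 ≤ ‖ζ n‖), (‖ζ n‖ ^ j)⁻¹
      ≤ 5 * C * 4 ^ k * (((2:ℝ) ^ k) ^ j)⁻¹ := by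
  have hterm : ∀ n ∈ u.filter (fun n => Nat.log 2 ⌊‖ζ n‖⌋₊ = k ∧ 1 ≤ ‖ζ n‖),
      (‖ζ n‖ ^ j)⁻¹ ≤ (((2:ℝ) ^ k) ^ j)⁻¹ := by
    intro n hn
    rw [Finset.mem_filter] at hn
    obtain ⟨-, hk, h1⟩ := hn
    have hlow := dy_lower ζ h1
    rw [hk] at hlow
    have hpos : (0:ℝ) < ((2:ℝ) ^ k) ^ j := by positivity
    exact inv_anti₀ hpos (pow_le_pow_left₀ (by positivity) hlow j)
  calc ∑ n ∈ u.filter (fun n => Nat.log 2 ⌊‖ζ n‖⌋₊ = k ∧ 1 ≤ ‖ζ n‖), (‖ζ n‖ ^ j)⁻¹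
      ≤ (u.filter (fun n => Nat.log 2 ⌊‖ζ n‖⌋₊ = k ∧ 1 ≤ ‖ζ n‖)).card • (((2:ℝ) ^ k) ^ j)⁻¹ :=
        Finset.sum_le_card_nsmul _ _ _ hterm
    _ = ((u.filter (fun n => Nat.log 2 ⌊‖ζ n‖⌋₊ = k ∧ 1 ≤ ‖ζ n‖)).card : ℝ)
          * (((2:ℝ) ^ k) ^ j)⁻¹ := by rw [nsmul_eq_mul]
    _ ≤ 5 * C * 4 ^ k * (((2:ℝ) ^ k) ^ j)⁻¹ := by
        exact mul_le_mul_of_nonneg_right (slice_card ζ C hC hcount u k) (by positivity)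

private lemma pow_two_eq_four (k : ℕ) : ((2:ℝ) ^ k) ^ 2 = 4 ^ k := by
  rw [← pow_mul, mul_comm, pow_mul]
  norm_num

include hC hcount in
private lemma quad_bound (T : ℝ) (hT : 2 ≤ T) (u : Finset ℕ) :
    ∑ n ∈ u.filter (fun n => 1 ≤ ‖ζ n‖ ∧ ‖ζ n‖ ≤ T), (‖ζ n‖ ^ 2)⁻¹
      ≤ 5 * C * (Nat.log 2 ⌊T⌋₊ + 1) := by
  set m := Nat.log 2 ⌊T⌋₊ with hm
  set v := u.filter (fun n => 1 ≤ ‖ζ n‖ ∧ ‖ζ n‖ ≤ T) with hv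
  have hmaps : ∀ n ∈ v, Nat.log 2 ⌊‖ζ n‖⌋₊ ∈ Finset.range (m + 1) := by
    intro n hn
    rw [hv, Finset.mem_filter] at hn
    rw [Finset.mem_range, Nat.lt_succ_iff, hm]
    exact Nat.log_mono_right (Nat.floor_le_floor hn.2.2)
  rw [← Finset.sum_fiberwise_of_maps_to hmaps (fun n => (‖ζ n‖ ^ 2)⁻¹)]
  have hinner : ∀ k ∈ Finset.range (m + 1),
      ∑ n ∈ v.filter (fun n => Nat.log 2 ⌊‖ζ n‖⌋₊ = k), (‖ζ n‖ ^ 2)⁻¹ ≤ 5 * C := by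
    intro k _
    have hsub : v.filter (fun n => Nat.log 2 ⌊‖ζ n‖⌋₊ = k)
        ⊆ u.filter (fun n => Nat.log 2 ⌊‖ζ n‖⌋₊ = k ∧ 1 ≤ ‖ζ n‖) := by
      intro n hn
      rw [hv] at hn
      rw [Finset.mem_filter] at hn ⊢
      rw [Finset.mem_filter] at hn
      exact ⟨hn.1.1, hn.2, hn.1.2.1⟩
    have h1 : ∑ n ∈ v.filter (fun n => Nat.log 2 ⌊‖ζ n‖⌋₊ = k), (‖ζ n‖ ^ 2)⁻¹
        ≤ ∑ n ∈ u.filter (fun n => Nat.log 2 ⌊‖ζ n‖⌋₊ = k ∧ 1 ≤ ‖ζ n‖), (‖ζ n‖ ^ 2)⁻¹ :=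
      Finset.sum_le_sum_of_subset_of_nonneg hsub (fun i _ _ => by positivity)
    refine h1.trans ((slice_sum ζ C hC hcount 2 u k).trans_eq ?_)
    rw [pow_two_eq_four, mul_assoc, mul_inv_cancel₀ (by positivity), mul_one]
  calc ∑ k ∈ Finset.range (m + 1), ∑ n ∈ v.filter (fun n => Nat.log 2 ⌊‖ζ n‖⌋₊ = k),
        (‖ζ n‖ ^ 2)⁻¹
      ≤ ∑ _k ∈ Finset.range (m + 1), 5 * C := Finset.sum_le_sum hinner
    _ = ((m + 1 : ℕ) : ℝ) * (5 * C) := by rw [Finset.sum_const, Finset.card_range, nsmul_eq_mul]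
    _ = 5 * C * ((m : ℝ) + 1) := by push_cast; ring

include hC hcount in
private lemma cubic_bound (T : ℝ) (hT : 2 ≤ T) (u : Finset ℕ) :
    ∑ n ∈ u.filter (fun n => T < ‖ζ n‖), (‖ζ n‖ ^ 3)⁻¹ ≤ 20 * C / T := by
  set v := u.filter (fun n => T < ‖ζ n‖) with hv
  have hmaps : ∀ n ∈ v, Nat.log 2 ⌊‖ζ n‖⌋₊ ∈ v.image (fun n => Nat.log 2 ⌊‖ζ n‖⌋₊) :=
    fun n hn => Finset.mem_image_of_mem _ hn
  rw [← Finset.sum_fiberwise_of_maps_to hmaps (fun n => (‖ζ n‖ ^ 3)⁻¹)]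
  have hinner : ∀ k ∈ v.image (fun n => Nat.log 2 ⌊‖ζ n‖⌋₊),
      ∑ n ∈ v.filter (fun n => Nat.log 2 ⌊‖ζ n‖⌋₊ = k), (‖ζ n‖ ^ 3)⁻¹
        ≤ 5 * C * ((2:ℝ) ^ k)⁻¹ := by
    intro k _
    have hsub : v.filter (fun n => Nat.log 2 ⌊‖ζ n‖⌋₊ = k)
        ⊆ u.filter (fun n => Nat.log 2 ⌊‖ζ n‖⌋₊ = k ∧ 1 ≤ ‖ζ n‖) := by
      intro n hn
      rw [hv] at hn
      rw [Finset.mem_filter] at hn ⊢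
      rw [Finset.mem_filter] at hn
      exact ⟨hn.1.1, hn.2, by linarith [hn.1.2]⟩
    have h1 := Finset.sum_le_sum_of_subset_of_nonneg hsub
      (fun (i : ℕ) _ _ => by positivity : ∀ i ∈ _, i ∉ _ → (0:ℝ) ≤ (‖ζ i‖ ^ 3)⁻¹)
    refine h1.trans ((slice_sum ζ C hC hcount 3 u k).trans_eq ?_)
    have h2 : ((2:ℝ) ^ k) ^ 3 = 4 ^ k * 2 ^ k := by
      rw [← pow_two_eq_four]
      ring
    rw [h2, mul_inv, ← mul_assoc, mul_assoc (5 * C), mul_inv_cancel₀ (by positivity : (4:ℝ)^k ≠ 0),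
      mul_one]
  have hgeom : ∑ k ∈ v.image (fun n => Nat.log 2 ⌊‖ζ n‖⌋₊), ((2:ℝ) ^ k)⁻¹ ≤ 2 / (T / 2) := by
    apply geom_bound _ _ (by linarith)
    intro k hk
    rw [Finset.mem_image] at hk
    obtain ⟨n, hn, hkn⟩ := hk
    rw [hv, Finset.mem_filter] at hn
    have hup := dy_upper ζ n
    rw [hkn, pow_succ] at hup
    have := hn.2
    linarith
  calc ∑ k ∈ v.image (fun n => Nat.log 2 ⌊‖ζ n‖⌋₊),
        ∑ n ∈ v.filter (fun n => Nat.log 2 ⌊‖ζ n‖⌋₊ = k), (‖ζ n‖ ^ 3)⁻¹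
      ≤ ∑ k ∈ v.image (fun n => Nat.log 2 ⌊‖ζ n‖⌋₊), 5 * C * ((2:ℝ) ^ k)⁻¹ :=
        Finset.sum_le_sum hinner
    _ = 5 * C * ∑ k ∈ v.image (fun n => Nat.log 2 ⌊‖ζ n‖⌋₊), ((2:ℝ) ^ k)⁻¹ := by
        rw [Finset.mul_sum]
    _ ≤ 5 * C * (2 / (T / 2)) := by
        exact mul_le_mul_of_nonneg_left hgeom (by positivity)
    _ = 20 * C / T := by
        field_simp
        ring

end counting

private lemma hasProd_zero_of_eq_zero {f : ℕ → ℂ} (n₀ : ℕ) (h : f n₀ = 0) : HasProd f 0 := by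
  have hev : (fun u : Finset ℕ => ∏ n ∈ u, f n) =ᶠ[Filter.atTop] (fun _ => 0) := by
    filter_upwards [Filter.eventually_ge_atTop ({n₀} : Finset ℕ)] with u hu
    exact Finset.prod_eq_zero (hu (Finset.mem_singleton_self n₀)) h
  exact (Filter.tendsto_congr' hev).2 tendsto_const_nhds

set_option maxHeartbeats 1000000 in
/-- Under the counting bound `#{n : |ζ n| ≤ r} ≤ C(1+r²)`, the genus-two
canonical product `P(s) = ∏ (1 − s/ζ n)·exp(s/ζ n + s²/(2 ζ n²))` satisfies
`|P(s)| ≤ exp(C′ (1 + |s|² log(2+|s|)))` for some `C′ > 0` and all `s ∈ ℂ`. -/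
theorem stmt5 (ζ : ℕ → ℂ) (hζ : ∀ n, ζ n ≠ 0) (C : ℝ) (hC : 0 < C)
    (hcount : ∀ r : ℝ, 0 ≤ r → {n : ℕ | ‖ζ n‖ ≤ r}.Finite ∧
      ({n : ℕ | ‖ζ n‖ ≤ r}.ncard : ℝ) ≤ C * (1 + r ^ 2))
    (P : ℂ → ℂ)
    (hP : ∀ s : ℂ, P s = ∏' n : ℕ,
      (1 - s / ζ n) * Complex.exp (s / ζ n + s ^ 2 / (2 * ζ n ^ 2))) :
    ∃ C' : ℝ, 0 < C' ∧ ∀ s : ℂ,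
      ‖P s‖ ≤ Real.exp (C' * (1 + ‖s‖ ^ 2 * Real.log (2 + ‖s‖))) := by
  classical
  obtain ⟨hfin1, -⟩ := hcount 1 zero_le_one
  set F₁ := hfin1.toFinset with hF₁
  set K₀ := ∑ n ∈ F₁, (‖ζ n‖ ^ 2)⁻¹ with hK₀def
  have hK₀ : 0 ≤ K₀ := Finset.sum_nonneg fun n _ => by positivity
  refine ⟨10 * K₀ + 165 * C + 1, by nlinarith, fun s => ?_⟩
  have hs0 : 0 ≤ ‖s‖ := norm_nonneg s
  set T := 2 + 2 * ‖s‖ with hTdef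
  have hT2 : 2 ≤ T := by rw [hTdef]; linarith
  have hTpos : 0 < T := by linarith
  set L := Real.log (2 + ‖s‖) with hLdef
  have hL2 : Real.log 2 ≤ L := by
    rw [hLdef]
    exact Real.log_le_log two_pos (by linarith)
  have hlog2 : (0.6931471803 : ℝ) < Real.log 2 := Real.log_two_gt_d9
  set g : ℕ → ℝ := fun n =>
    if ‖ζ n‖ ≤ T then 5 * ‖s‖ ^ 2 * (‖ζ n‖ ^ 2)⁻¹ else 2 * ‖s‖ ^ 3 * (‖ζ n‖ ^ 3)⁻¹ with hgdef
  have hg0 : ∀ n, 0 ≤ g n := by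
    intro n
    rw [hgdef]
    dsimp only
    split <;> positivity
  set m := Nat.log 2 ⌊T⌋₊ with hmdef
  -- 2^m ≤ T
  have hfl2 : (2 : ℕ) ≤ ⌊T⌋₊ := Nat.le_floor (by exact_mod_cast hT2)
  have hm1 : (2:ℝ) ^ m ≤ T := by
    have h2 : (2:ℕ) ^ m ≤ ⌊T⌋₊ := Nat.pow_log_le_self 2 (by omega)
    calc (2:ℝ) ^ m = ((2 ^ m : ℕ) : ℝ) := by push_cast; ring
      _ ≤ (⌊T⌋₊ : ℝ) := by exact_mod_cast h2
      _ ≤ T := Nat.floor_le (by linarith)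
  have hmL : ((m:ℝ) + 1) ≤ 5 * L := by
    have hm0 : (0:ℝ) ≤ (m:ℝ) := Nat.cast_nonneg m
    have h1 : (m:ℝ) * Real.log 2 ≤ 2 * L := by
      have h2 : Real.log ((2:ℝ) ^ m) ≤ Real.log ((2 + ‖s‖) ^ 2) := by
        apply Real.log_le_log (by positivity)
        refine hm1.trans ?_
        rw [hTdef]; nlinarith
      rw [Real.log_pow, Real.log_pow, ← hLdef] at h2
      exact_mod_cast h2
    have h3 : (m:ℝ) * (0.6931471803 : ℝ) ≤ (m:ℝ) * Real.log 2 :=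
      mul_le_mul_of_nonneg_left hlog2.le hm0
    linarith
  -- key finset bound
  set B := 5 * ‖s‖ ^ 2 * K₀ + 5 * ‖s‖ ^ 2 * (5 * C * ((m:ℝ) + 1)) + 2 * ‖s‖ ^ 3 * (20 * C / T)
    with hBdef
  clear_value K₀ T L g m B
  have key : ∀ u : Finset ℕ, ∑ n ∈ u, g n ≤ B := by
    intro u
    rw [← Finset.sum_filter_add_sum_filter_not u (fun n => ‖ζ n‖ ≤ T) g]
    have hquadeq : ∑ n ∈ u.filter (fun n => ‖ζ n‖ ≤ T), g n
        = 5 * ‖s‖ ^ 2 * ∑ n ∈ u.filter (fun n => ‖ζ n‖ ≤ T), (‖ζ n‖ ^ 2)⁻¹ := by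
      rw [Finset.mul_sum]
      refine Finset.sum_congr rfl fun n hn => ?_
      rw [Finset.mem_filter] at hn
      rw [hgdef]
      exact if_pos hn.2
    have hcubeq : ∑ n ∈ u.filter (fun n => ¬ ‖ζ n‖ ≤ T), g n
        = 2 * ‖s‖ ^ 3 * ∑ n ∈ u.filter (fun n => ¬ ‖ζ n‖ ≤ T), (‖ζ n‖ ^ 3)⁻¹ := by
      rw [Finset.mul_sum]
      refine Finset.sum_congr rfl fun n hn => ?_
      rw [Finset.mem_filter] at hn
      rw [hgdef]
      exact if_neg hn.2
    -- quadratic part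
    have hquad : ∑ n ∈ u.filter (fun n => ‖ζ n‖ ≤ T), (‖ζ n‖ ^ 2)⁻¹
        ≤ K₀ + 5 * C * ((m:ℝ) + 1) := by
      rw [← Finset.sum_filter_add_sum_filter_not (u.filter (fun n => ‖ζ n‖ ≤ T))
        (fun n => ‖ζ n‖ < 1) (fun n => (‖ζ n‖ ^ 2)⁻¹)]
      have hsmall : ∑ n ∈ (u.filter (fun n => ‖ζ n‖ ≤ T)).filter (fun n => ‖ζ n‖ < 1),
          (‖ζ n‖ ^ 2)⁻¹ ≤ K₀ := by
        rw [hK₀def]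
        apply Finset.sum_le_sum_of_subset_of_nonneg
        · intro n hn
          rw [Finset.mem_filter] at hn
          rw [hF₁, Set.Finite.mem_toFinset]
          exact le_of_lt hn.2
        · intro i _ _
          positivity
      have hmid : ∑ n ∈ (u.filter (fun n => ‖ζ n‖ ≤ T)).filter (fun n => ¬ ‖ζ n‖ < 1),
          (‖ζ n‖ ^ 2)⁻¹ ≤ 5 * C * ((m:ℝ) + 1) := by
        rw [hmdef]
        refine le_trans (Finset.sum_le_sum_of_subset_of_nonneg ?_ fun i _ _ => by positivity)
          (quad_bound ζ C hC hcount T hT2 u)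
        intro n hn
        rw [Finset.mem_filter] at hn ⊢
        rw [Finset.mem_filter] at hn
        exact ⟨hn.1.1, not_lt.1 hn.2, hn.1.2⟩
      linarith
    -- cubic part
    have hfeq : u.filter (fun n => ¬ ‖ζ n‖ ≤ T) = u.filter (fun n => T < ‖ζ n‖) := by
      apply Finset.filter_congr
      intro x _
      simp [not_le]
    have hcub : ∑ n ∈ u.filter (fun n => ¬ ‖ζ n‖ ≤ T), (‖ζ n‖ ^ 3)⁻¹ ≤ 20 * C / T := by
      rw [hfeq]
      exact cubic_bound ζ C hC hcount T hT2 u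
    rw [hquadeq, hcubeq, hBdef]
    have h5 : (0:ℝ) ≤ 5 * ‖s‖ ^ 2 := by positivity
    have h6 : (0:ℝ) ≤ 2 * ‖s‖ ^ 3 := by positivity
    nlinarith [mul_le_mul_of_nonneg_left hquad h5, mul_le_mul_of_nonneg_left hcub h6]
  have hgsum : Summable g := summable_of_sum_range_le hg0 (fun n => key _)
  have htsum : ∑' n, g n ≤ B := Real.tsum_le_of_sum_range_le hg0 (fun n => key _)
  have hBC' : B ≤ (10 * K₀ + 165 * C + 1) * (1 + ‖s‖ ^ 2 * L) := by
    have hcA : 2 * ‖s‖ ^ 3 * (20 * C / T) ≤ 20 * C * ‖s‖ ^ 2 := by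
      have e : (2:ℝ) * ‖s‖ ^ 3 * (20 * C / T) = 40 * C * ‖s‖ ^ 3 / T := by ring
      rw [e, div_le_iff₀ hTpos]
      have hTe : T = 2 + 2 * ‖s‖ := hTdef
      nlinarith [hC.le, pow_nonneg hs0 2, pow_nonneg hs0 3,
        mul_nonneg (mul_nonneg hC.le (pow_nonneg hs0 2)) hs0,
        mul_nonneg hC.le (pow_nonneg hs0 2), mul_nonneg hC.le (pow_nonneg hs0 3)]
    have hcB : 5 * ‖s‖ ^ 2 * (5 * C * ((m:ℝ) + 1)) ≤ 125 * C * (‖s‖ ^ 2 * L) := by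
      have h25 : (0:ℝ) ≤ 25 * C * ‖s‖ ^ 2 :=
        mul_nonneg (by linarith) (pow_nonneg hs0 2)
      have := mul_le_mul_of_nonneg_left hmL h25
      nlinarith
    have hL0 : (0:ℝ) < L := by linarith
    have hs2L : ‖s‖ ^ 2 ≤ 2 * (‖s‖ ^ 2 * L) := by
      have h1 : (1:ℝ) ≤ 2 * L := by linarith
      have h2 := mul_le_mul_of_nonneg_left h1 (pow_nonneg hs0 2)
      linarith [h2]
    have hsL0 : 0 ≤ ‖s‖ ^ 2 * L := by positivity
    rw [hBdef]
    nlinarith [mul_le_mul_of_nonneg_left hs2L (by linarith : (0:ℝ) ≤ 5 * K₀),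
      mul_le_mul_of_nonneg_left hs2L (by linarith : (0:ℝ) ≤ 20 * C)]
  -- the product
  set f : ℕ → ℂ := fun n => (1 - s / ζ n) * Complex.exp (s / ζ n + s ^ 2 / (2 * ζ n ^ 2))
    with hfdef
  have hfeq2 : ∀ n, f n = (1 - s / ζ n) * Complex.exp (s / ζ n + (s / ζ n) ^ 2 / 2) := by
    intro n
    rw [hfdef]
    dsimp only
    congr 2
    rw [div_pow, div_div, mul_comm]
  have hfg : ∀ n, ‖f n‖ ≤ Real.exp (g n) := by
    intro n
    rw [hfeq2]
    by_cases hn : ‖ζ n‖ ≤ T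
    · refine (aux_quad (s / ζ n)).trans (Real.exp_le_exp.2 (le_of_eq ?_))
      rw [hgdef]
      simp only [if_pos hn]
      rw [norm_div]
      ring
    · push_neg at hn
      have hζpos : (0:ℝ) < ‖ζ n‖ := by linarith
      have hhalf : ‖s / ζ n‖ ≤ 1 / 2 := by
        rw [norm_div, div_le_iff₀ hζpos]
        rw [hTdef] at hn
        linarith
      refine (aux_cubic hhalf).trans (Real.exp_le_exp.2 (le_of_eq ?_))
      rw [hgdef]
      simp only [if_neg (not_le.2 hn)]
      rw [norm_div]
      ring
  have hprod : HasProd f (P s) := by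
    by_cases hzero : ∃ n, f n = 0
    · obtain ⟨n₀, h0⟩ := hzero
      have h1 : HasProd f 0 := hasProd_zero_of_eq_zero n₀ h0
      rw [hP s]
      rw [show (∏' n : ℕ, (1 - s / ζ n) * Complex.exp (s / ζ n + s ^ 2 / (2 * ζ n ^ 2)))
        = ∏' n, f n from rfl, h1.tprod_eq]
      exact h1
    · push_neg at hzero
      have hlogsum : Summable (fun n => Complex.log (f n)) := by
        obtain ⟨hfinT, -⟩ := hcount T (by linarith)
        rw [← hfinT.summable_compl_iff]
        refine Summable.of_norm_bounded (g := fun x => g x.1) (hgsum.subtype _) ?_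
        rintro ⟨n, hn⟩
        have hn' : ¬ ‖ζ n‖ ≤ T := hn
        push_neg at hn'
        have hζpos : (0:ℝ) < ‖ζ n‖ := by linarith
        have hhalf : ‖s / ζ n‖ ≤ 1 / 2 := by
          rw [norm_div, div_le_iff₀ hζpos]
          rw [hTdef] at hn'
          linarith
        have hb := aux_log_bound hhalf
        rw [← hfeq2 n] at hb
        refine hb.trans (le_of_eq ?_)
        rw [hgdef]
        simp only [if_neg (not_le.2 hn')]
        rw [norm_div]
        ring
      have hmult : Multipliable f :=
        Complex.multipliable_of_summable_log hlogsum
      rw [hP s]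
      exact hmult.hasProd
  have hpartial : ∀ u : Finset ℕ, ‖∏ n ∈ u, f n‖ ≤ Real.exp (∑' n, g n) := by
    intro u
    rw [norm_prod]
    calc ∏ n ∈ u, ‖f n‖ ≤ ∏ n ∈ u, Real.exp (g n) :=
        Finset.prod_le_prod (fun i _ => norm_nonneg _) (fun i _ => hfg i)
      _ = Real.exp (∑ n ∈ u, g n) := (Real.exp_sum u g).symm
      _ ≤ Real.exp (∑' n, g n) :=
        Real.exp_le_exp.2 (Summable.sum_le_tsum u (fun i _ => hg0 i) hgsum)
  have ht : Filter.Tendsto (fun u : Finset ℕ => ∏ n ∈ u, f n) Filter.atTop (nhds (P s)) := hprod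
  have hnorm : ‖P s‖ ≤ Real.exp (∑' n, g n) := le_of_tendsto' ht.norm hpartial
  calc ‖P s‖ ≤ Real.exp (∑' n, g n) := hnorm
    _ ≤ Real.exp B := Real.exp_le_exp.2 htsum
    _ ≤ Real.exp ((10 * K₀ + 165 * C + 1) * (1 + ‖s‖ ^ 2 * L)) := Real.exp_le_exp.2 hBC'
end

section
/- Let ζ : ℕ → ℂ satisfy #{n : |ζ(n)| ≤ r} ≤ C(1+r²) for all r ≥ 0, and let δ > 0. Then there exist c > 0 and a countable collection (D_j) of pairwise disjoint open discs in ℂ such that {ζ(n) : n ∈ ℕ} ⊆ ∪_j D_j, and every s ∈ ℂ with s ∉ ∪_j D_j satisfies |s − ζ(n)| ≥ c·(1+|s|²)^{−(2+δ)/2} for all n. -/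
open Metric Set

lemma mergeBalls {E : Type*} [NormedAddCommGroup E] [NormedSpace ℝ E]
    {c₁ c₂ : E} {r₁ r₂ : ℝ} (h : ¬ Disjoint (ball c₁ r₁) (ball c₂ r₂)) :
    ∃ z ρ, ρ ≤ r₁ + r₂ ∧ ball c₁ r₁ ⊆ ball z ρ ∧ ball c₂ r₂ ⊆ ball z ρ := by
  rw [Set.not_disjoint_iff] at h
  obtain ⟨p, hp1, hp2⟩ := h
  rw [mem_ball] at hp1 hp2
  have hr1 : 0 < r₁ := lt_of_le_of_lt dist_nonneg hp1
  have hr2 : 0 < r₂ := lt_of_le_of_lt dist_nonneg hp2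
  have hd : dist c₁ c₂ < r₁ + r₂ := by
    calc dist c₁ c₂ ≤ dist c₁ p + dist p c₂ := dist_triangle _ _ _
    _ < r₁ + r₂ := by rw [dist_comm c₁ p]; exact add_lt_add hp1 hp2
  set d := dist c₁ c₂ with hd_def
  have hd0 : 0 ≤ d := dist_nonneg
  by_cases h1 : d + r₁ ≤ r₂
  · exact ⟨c₂, r₂, by linarith, fun x hx => by
      rw [mem_ball] at hx ⊢
      calc dist x c₂ ≤ dist x c₁ + d := by rw [hd_def]; exact dist_triangle _ _ _
      _ < r₁ + d := by linarith
      _ ≤ r₂ := by linarith, subset_rfl⟩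
  by_cases h2 : d + r₂ ≤ r₁
  · exact ⟨c₁, r₁, by linarith, subset_rfl, fun x hx => by
      rw [mem_ball] at hx ⊢
      calc dist x c₁ ≤ dist x c₂ + dist c₂ c₁ := dist_triangle _ _ _
      _ < r₂ + d := by rw [dist_comm c₂ c₁]; linarith
      _ ≤ r₁ := by linarith⟩
  push_neg at h1 h2
  have hdpos : 0 < d := by
    rcases eq_or_lt_of_le hd0 with h | h
    · exfalso; rw [← h] at h1 h2; linarith
    · exact h
  set ρ := (d + r₁ + r₂) / 2 with hρ_def
  set z := c₁ + ((ρ - r₁) / d) • (c₂ - c₁) with hz_def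
  have hzc1 : dist z c₁ = ρ - r₁ := by
    rw [dist_eq_norm, hz_def]
    have : c₁ + ((ρ - r₁) / d) • (c₂ - c₁) - c₁ = ((ρ - r₁) / d) • (c₂ - c₁) := by abel
    rw [this, norm_smul, Real.norm_eq_abs, abs_of_nonneg (div_nonneg (by rw [hρ_def]; linarith) hd0)]
    rw [show ‖c₂ - c₁‖ = d from by rw [hd_def, dist_eq_norm, norm_sub_rev]]
    field_simp
  have hzc2 : dist z c₂ = ρ - r₂ := by
    rw [dist_eq_norm, hz_def]
    have : c₁ + ((ρ - r₁) / d) • (c₂ - c₁) - c₂ = (((ρ - r₁) / d) - 1) • (c₂ - c₁) := by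
      rw [sub_smul, one_smul]; abel
    rw [this, norm_smul, Real.norm_eq_abs]
    rw [show ‖c₂ - c₁‖ = d from by rw [hd_def, dist_eq_norm, norm_sub_rev]]
    have h3 : (ρ - r₁) / d - 1 = (ρ - r₁ - d) / d := by field_simp
    rw [h3, abs_div, abs_of_pos hdpos]
    rw [abs_of_nonpos (by rw [hρ_def]; linarith)]
    field_simp
    rw [hρ_def]; ring
  refine ⟨z, ρ, by rw [hρ_def]; linarith, fun x hx => ?_, fun x hx => ?_⟩
  · rw [mem_ball] at hx ⊢
    calc dist x z ≤ dist x c₁ + dist c₁ z := dist_triangle _ _ _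
    _ < r₁ + (ρ - r₁) := by rw [dist_comm c₁ z, hzc1]; linarith
    _ = ρ := by ring
  · rw [mem_ball] at hx ⊢
    calc dist x z ≤ dist x c₂ + dist c₂ z := dist_triangle _ _ _
    _ < r₂ + (ρ - r₂) := by rw [dist_comm c₂ z, hzc2]; linarith
    _ = ρ := by ring

lemma summable_weights (ζ : ℕ → ℂ) (C : ℝ) (hC : 0 < C)
    (hcount : ∀ r : ℝ, 0 ≤ r → {n : ℕ | ‖ζ n‖ ≤ r}.Finite ∧
      ({n : ℕ | ‖ζ n‖ ≤ r}.ncard : ℝ) ≤ C * (1 + r ^ 2))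
    (q : ℝ) (hq : 1 < q) :
    Summable (fun n => ((1 + ‖ζ n‖ ^ 2) ^ q)⁻¹) := by
  classical
  set f : ℕ → ℝ := fun n => ((1 + ‖ζ n‖ ^ 2) ^ q)⁻¹ with hf
  have hq0 : 0 ≤ q := by linarith
  have hbase : ∀ n, (0:ℝ) < 1 + ‖ζ n‖ ^ 2 := fun n => by positivity
  have hfnonneg : ∀ n, 0 ≤ f n := fun n => by
    have := hbase n; rw [hf]; positivity
  have hZsum : Summable (fun j : ℕ => ((j:ℝ) ^ q)⁻¹) := Real.summable_nat_rpow_inv.mpr hq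
  set Z := ∑' j : ℕ, ((j:ℝ) ^ q)⁻¹ with hZ
  have key : ∀ F : Finset ℕ, ∑ n ∈ F, f n ≤ C ^ q * Z := by
    intro F
    set pred : ℕ → ℕ → Prop := fun m n => ‖ζ m‖ < ‖ζ n‖ ∨ (‖ζ m‖ = ‖ζ n‖ ∧ m ≤ n) with hpred
    set rk : ℕ → ℕ := fun n => (F.filter (fun m => pred m n)).card with hrk
    have hrk_pos : ∀ n ∈ F, 1 ≤ rk n := by
      intro n hn
      have hmem : n ∈ F.filter (fun m => pred m n) :=
        Finset.mem_filter.mpr ⟨hn, Or.inr ⟨rfl, le_refl n⟩⟩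
      exact Finset.card_pos.mpr ⟨n, hmem⟩
    have hrk_le : ∀ n, (rk n : ℝ) ≤ C * (1 + ‖ζ n‖ ^ 2) := by
      intro n
      obtain ⟨hfin, hcard⟩ := hcount (‖ζ n‖) (norm_nonneg _)
      have hsub : F.filter (fun m => pred m n) ⊆ hfin.toFinset := by
        intro m hm
        rw [Finset.mem_filter] at hm
        rw [Set.Finite.mem_toFinset]
        rcases hm.2 with h | h
        · exact le_of_lt h
        · exact le_of_eq h.1
      calc (rk n : ℝ) ≤ (hfin.toFinset.card : ℝ) := by
            exact_mod_cast Finset.card_le_card hsub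
      _ = ({m : ℕ | ‖ζ m‖ ≤ ‖ζ n‖}.ncard : ℝ) := by
            rw [Set.ncard_eq_toFinset_card _ hfin]
      _ ≤ C * (1 + ‖ζ n‖ ^ 2) := hcard
    have key2 : ∀ m ∈ F, ∀ n ∈ F,
        (‖ζ m‖ < ‖ζ n‖ ∨ (‖ζ m‖ = ‖ζ n‖ ∧ m < n)) → rk m < rk n := by
      intro m hm n hn hL
      apply Finset.card_lt_card
      rw [Finset.ssubset_iff_of_subset]
      · refine ⟨n, Finset.mem_filter.mpr ⟨hn, Or.inr ⟨rfl, le_refl n⟩⟩, ?_⟩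
        intro hcon
        rw [Finset.mem_filter] at hcon
        rcases hcon.2 with h | h
        · rcases hL with h' | h'
          · exact absurd (h.trans h') (lt_irrefl _)
          · rw [h'.1] at h; exact absurd h (lt_irrefl _)
        · rcases hL with h' | h'
          · rw [h.1] at h'; exact absurd h' (lt_irrefl _)
          · omega
      · intro x hx
        rw [Finset.mem_filter] at hx ⊢
        refine ⟨hx.1, ?_⟩
        rcases hx.2 with h | h
        · rcases hL with h' | h'
          · exact Or.inl (h.trans h')
          · exact Or.inl (h'.1 ▸ h)
        · rcases hL with h' | h'
          · exact Or.inl (h.1 ▸ h')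
          · exact Or.inr ⟨h.1.trans h'.1, le_trans h.2 (le_of_lt h'.2)⟩
    have hinj : ∀ m ∈ F, ∀ n ∈ F, rk m = rk n → m = n := by
      intro m hm n hn hmn
      by_contra hne
      rcases lt_trichotomy ‖ζ m‖ ‖ζ n‖ with h | h | h
      · exact absurd hmn (ne_of_lt (key2 m hm n hn (Or.inl h)))
      · rcases lt_trichotomy m n with h' | h' | h'
        · exact absurd hmn (ne_of_lt (key2 m hm n hn (Or.inr ⟨h, h'⟩)))
        · exact hne h'
        · exact absurd hmn.symm (ne_of_lt (key2 n hn m hm (Or.inr ⟨h.symm, h'⟩)))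
      · exact absurd hmn.symm (ne_of_lt (key2 n hn m hm (Or.inl h)))
    have hfle : ∀ n ∈ F, f n ≤ C ^ q * (((rk n : ℝ)) ^ q)⁻¹ := by
      intro n hn
      have hr1 : (1:ℝ) ≤ (rk n : ℝ) := by exact_mod_cast hrk_pos n hn
      have hrpos : (0:ℝ) < (rk n : ℝ) := by linarith
      have h1 : (rk n : ℝ) / C ≤ 1 + ‖ζ n‖ ^ 2 := by
        rw [div_le_iff₀ hC]
        calc (rk n : ℝ) ≤ C * (1 + ‖ζ n‖ ^ 2) := hrk_le n
        _ = (1 + ‖ζ n‖ ^ 2) * C := by ring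
      have h2 : ((rk n : ℝ) / C) ^ q ≤ (1 + ‖ζ n‖ ^ 2) ^ q :=
        Real.rpow_le_rpow (by positivity) h1 hq0
      have h3 : (0:ℝ) < ((rk n : ℝ) / C) ^ q := Real.rpow_pos_of_pos (by positivity) q
      have h4 := inv_anti₀ h3 h2
      rw [hf]
      calc ((1 + ‖ζ n‖ ^ 2) ^ q)⁻¹ ≤ (((rk n : ℝ) / C) ^ q)⁻¹ := h4
      _ = C ^ q * (((rk n : ℝ)) ^ q)⁻¹ := by
          rw [Real.div_rpow (le_of_lt hrpos) (le_of_lt hC), inv_div]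
          ring
    calc ∑ n ∈ F, f n ≤ ∑ n ∈ F, C ^ q * (((rk n : ℝ)) ^ q)⁻¹ :=
          Finset.sum_le_sum hfle
    _ = C ^ q * ∑ n ∈ F, (((rk n : ℝ)) ^ q)⁻¹ := by rw [Finset.mul_sum]
    _ = C ^ q * ∑ j ∈ F.image rk, (((j : ℝ)) ^ q)⁻¹ := by
          rw [Finset.sum_image hinj]
    _ ≤ C ^ q * Z := by
          apply mul_le_mul_of_nonneg_left _ (Real.rpow_nonneg (le_of_lt hC) q)
          exact Summable.sum_le_tsum _ (fun j _ => by positivity) hZsum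
  exact summable_of_sum_range_le hfnonneg (fun m => key (Finset.range m))

def inv3 (A : ℕ → ℂ) (w : ℕ → ℝ) (P : Finset ℕ) (x : ℂ × ℝ × Finset ℕ) : Prop :=
  x.2.2.Nonempty ∧ x.2.2 ⊆ P ∧ x.2.1 ≤ ∑ n ∈ x.2.2, w n ∧
    ∀ n ∈ x.2.2, ball (A n) (w n) ⊆ ball x.1 x.2.1

lemma cartan (A : ℕ → ℂ) (w : ℕ → ℝ) (P : Finset ℕ) :
    ∀ (N : ℕ) (S : Finset (ℂ × ℝ × Finset ℕ)), S.card ≤ N →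
    (∀ x ∈ S, inv3 A w P x) →
    ((S : Set (ℂ × ℝ × Finset ℕ)).Pairwise fun x y => Disjoint x.2.2 y.2.2) →
    ∃ T : Finset (ℂ × ℝ × Finset ℕ), (∀ x ∈ T, inv3 A w P x) ∧
      ((T : Set (ℂ × ℝ × Finset ℕ)).Pairwise fun x y =>
        Disjoint (ball x.1 x.2.1) (ball y.1 y.2.1)) ∧
      ∀ x ∈ S, ∃ y ∈ T, ball x.1 x.2.1 ⊆ ball y.1 y.2.1 ∧ x.2.2 ⊆ y.2.2 := by
  intro N
  induction N with
  | zero =>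
    intro S hcard _ _
    have : S = ∅ := Finset.card_eq_zero.mp (Nat.le_zero.mp hcard)
    subst this
    exact ⟨∅, by simp, by simp, by simp⟩
  | succ N ih =>
    intro S hcard hinv hlab
    by_cases hdisj : (S : Set (ℂ × ℝ × Finset ℕ)).Pairwise fun x y =>
        Disjoint (ball x.1 x.2.1) (ball y.1 y.2.1)
    · exact ⟨S, hinv, hdisj, fun x hx => ⟨x, hx, subset_rfl, subset_rfl⟩⟩
    · rw [Set.Pairwise] at hdisj; push_neg at hdisj
      obtain ⟨x, hx, y, hy, hxy, hnd⟩ := hdisj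
      rw [Finset.mem_coe] at hx hy
      obtain ⟨z, ρ, hρ, hbx, hby⟩ := mergeBalls hnd
      have hlabxy : Disjoint x.2.2 y.2.2 := hlab hx hy hxy
      set u : ℂ × ℝ × Finset ℕ := (z, ρ, x.2.2 ∪ y.2.2) with hu
      set S₀ := (S.erase x).erase y with hS₀
      have hS₀sub : S₀ ⊆ S := (Finset.erase_subset _ _).trans (Finset.erase_subset _ _)
      have hxinv := hinv x hx
      have hyinv := hinv y hy
      have huinv : inv3 A w P u := by
        refine ⟨hxinv.1.mono Finset.subset_union_left,
          Finset.union_subset hxinv.2.1 hyinv.2.1, ?_, ?_⟩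
        · rw [Finset.sum_union hlabxy]
          calc ρ ≤ x.2.1 + y.2.1 := hρ
          _ ≤ _ := add_le_add hxinv.2.2.1 hyinv.2.2.1
        · intro n hn
          rcases Finset.mem_union.mp hn with hn | hn
          · exact (hxinv.2.2.2 n hn).trans hbx
          · exact (hyinv.2.2.2 n hn).trans hby
      have hmemS₀ : ∀ v ∈ S₀, v ∈ S ∧ v ≠ x ∧ v ≠ y := by
        intro v hv
        rw [hS₀, Finset.mem_erase, Finset.mem_erase] at hv
        exact ⟨hv.2.2, hv.2.1, hv.1⟩
      have hS₀lab : ∀ v ∈ S₀, Disjoint v.2.2 u.2.2 := by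
        intro v hv
        obtain ⟨hvS, hvx, hvy⟩ := hmemS₀ v hv
        exact Finset.disjoint_union_right.mpr ⟨hlab hvS hx hvx, hlab hvS hy hvy⟩
      set S' := insert u S₀ with hS'
      have hcard' : S'.card ≤ N := by
        have hyS : y ∈ S.erase x := Finset.mem_erase.mpr ⟨fun h => hxy h.symm, hy⟩
        have h1 : (S.erase x).card = S.card - 1 := Finset.card_erase_of_mem hx
        have h2 : S₀.card = (S.erase x).card - 1 := Finset.card_erase_of_mem hyS
        have h3 : 2 ≤ S.card := by
          have := Finset.one_lt_card.mpr ⟨x, hx, y, hy, hxy⟩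
          omega
        have h4 : S'.card ≤ S₀.card + 1 := by rw [hS']; exact Finset.card_insert_le u S₀
        omega
      have hinv' : ∀ v ∈ S', inv3 A w P v := by
        intro v hv
        rcases Finset.mem_insert.mp hv with h | h
        · subst h; exact huinv
        · exact hinv v (hmemS₀ v h).1
      have hlab' : (S' : Set (ℂ × ℝ × Finset ℕ)).Pairwise fun a b => Disjoint a.2.2 b.2.2 := by
        rw [hS', Finset.coe_insert]
        apply Set.Pairwise.insert
        · exact hlab.mono (by exact_mod_cast hS₀sub)
        · intro v hv _
          rw [Finset.mem_coe] at hv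
          exact ⟨(hS₀lab v hv).symm, hS₀lab v hv⟩
      obtain ⟨T, hT1, hT2, hT3⟩ := ih S' hcard' hinv' hlab'
      refine ⟨T, hT1, hT2, ?_⟩
      intro v hv
      by_cases hvx : v = x
      · subst hvx
        obtain ⟨yy, hyy, hsub, hlsub⟩ := hT3 u (Finset.mem_insert_self u S₀)
        exact ⟨yy, hyy, hbx.trans hsub, Finset.subset_union_left.trans hlsub⟩
      by_cases hvy : v = y
      · subst hvy
        obtain ⟨yy, hyy, hsub, hlsub⟩ := hT3 u (Finset.mem_insert_self u S₀)
        exact ⟨yy, hyy, hby.trans hsub, Finset.subset_union_right.trans hlsub⟩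
      · have : v ∈ S₀ := by
          rw [hS₀, Finset.mem_erase, Finset.mem_erase]
          exact ⟨hvy, hvx, hv⟩
        exact hT3 v (Finset.mem_insert_of_mem this)
namespace S6

noncomputable def dlen (k : ℕ) : ℝ := ((2:ℝ) ^ k)⁻¹
def Jmem (k m : ℕ) (x : ℝ) : Prop := 0 ≤ x ∧ ⌊x * 2 ^ k⌋₊ = m
open Classical in
noncomputable def muJ (a h : ℕ → ℝ) (k m : ℕ) : ℝ :=
  ∑' n, if Jmem k m (a n) then h n else 0
def heavy (a h : ℕ → ℝ) (k m : ℕ) : Prop := dlen k ≤ 12 * muJ a h k m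
def mh (heavy : ℕ → ℕ → Prop) (k m : ℕ) : Prop :=
  heavy k m ∧ ∀ k' < k, ¬ heavy k' (m / 2 ^ (k - k'))
def good (a h : ℕ → ℝ) (t : ℝ) : Prop :=
  ∀ I : Finset ℕ, I.Nonempty → ∃ n ∈ I, 2 * ∑ m ∈ I, h m < |a n - t|

variable {a h : ℕ → ℝ}

lemma dlen_pos (k : ℕ) : 0 < dlen k := by unfold dlen; positivity
lemma dlen_anti {k' k : ℕ} (hk : k' ≤ k) : dlen k ≤ dlen k' := by
  unfold dlen
  exact inv_anti₀ (by positivity) (pow_le_pow_right₀ (by norm_num) hk)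
lemma dlen_succ (k : ℕ) : dlen (k + 1) = dlen k / 2 := by
  unfold dlen; rw [pow_succ]; field_simp
lemma dlen_zero : dlen 0 = 1 := by unfold dlen; norm_num
lemma dlen_mul (k : ℕ) : dlen k * 2 ^ k = 1 := by
  unfold dlen; field_simp

lemma finsum_le_muJ (hpos : ∀ n, 0 < h n) (hsum : Summable h) (k m : ℕ) (I : Finset ℕ)
    (hmem : ∀ n ∈ I, Jmem k m (a n)) : ∑ n ∈ I, h n ≤ muJ a h k m := by
  classical
  have e : ∑ n ∈ I, h n = ∑ n ∈ I, (if Jmem k m (a n) then h n else 0) :=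
    Finset.sum_congr rfl (fun n hn => by rw [if_pos (hmem n hn)])
  rw [e, muJ]
  have hsummand : Summable (fun n => if Jmem k m (a n) then h n else 0) := by
    apply Summable.of_nonneg_of_le (fun n => ?_) (fun n => ?_) hsum
    · split; exacts [(hpos n).le, le_rfl]
    · split; exacts [le_rfl, (hpos n).le]
  convert Summable.sum_le_tsum I (fun n _ => by split; exacts [(hpos n).le, le_rfl]) hsummand using 2

lemma Jmem_bounds {k m : ℕ} {x : ℝ} (hx : Jmem k m x) :
    (m : ℝ) * dlen k ≤ x ∧ x < ((m : ℝ) + 1) * dlen k := by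
  obtain ⟨hx0, hfl⟩ := hx
  have hp : (0:ℝ) < 2 ^ k := by positivity
  have h1 : (m : ℝ) ≤ x * 2 ^ k := hfl ▸ Nat.floor_le (by positivity)
  have h2 : x * 2 ^ k < (m : ℝ) + 1 := by
    rw [← hfl]; exact Nat.lt_floor_add_one _
  constructor
  · rw [dlen, mul_inv_le_iff₀ hp]; linarith
  · rw [dlen, lt_mul_inv_iff₀ hp]; linarith

lemma heavy_to_mh {hv : ℕ → ℕ → Prop} {k m : ℕ} (hkm : hv k m) :
    ∃ k' ≤ k, mh hv k' (m / 2 ^ (k - k')) := by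
  classical
  have hex : ∃ j, j ≤ k ∧ hv j (m / 2 ^ (k - j)) := ⟨k, le_rfl, by simpa using hkm⟩
  set k' := Nat.find hex with hk'
  obtain ⟨hk'le, hk'h⟩ := Nat.find_spec hex
  refine ⟨k', hk'le, hk'h, ?_⟩
  intro k'' hk''
  have hdiv : m / 2 ^ (k - k') / 2 ^ (k' - k'') = m / 2 ^ (k - k'') := by
    rw [Nat.div_div_eq_div_mul, ← pow_add]
    have he : k - k' + (k' - k'') = k - k'' := by omega
    rw [he]
  rw [hdiv]
  have hmin := Nat.find_min hex hk''
  intro hcon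
  exact hmin ⟨le_trans (le_of_lt hk'') hk'le, hcon⟩

lemma bad_covered (ha : ∀ n, 0 ≤ a n) (hpos : ∀ n, 0 < h n) (hsum : Summable h)
    (hS : ∑' n, h n ≤ 1/1000) {t : ℝ} (ht : 1 ≤ t) (hbad : ¬ good a h t) :
    ∃ p : ℕ × ℕ, mh (heavy a h) p.1 p.2 ∧
      |t - (p.2 : ℝ) * dlen p.1| ≤ 3 * dlen p.1 := by
  classical
  unfold good at hbad
  push_neg at hbad
  obtain ⟨I, hIne, hall⟩ := hbad
  set σ := ∑ m ∈ I, h m with hσ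
  have hσpos : 0 < σ := Finset.sum_pos (fun i _ => hpos i) hIne
  have hσS : σ ≤ 1/1000 :=
    le_trans (Summable.sum_le_tsum I (fun n _ => (hpos n).le) hsum) hS
  -- find the dyadic scale
  have hexk : ∃ j : ℕ, dlen (j + 1) < σ := by
    obtain ⟨j, hj⟩ := pow_unbounded_of_one_lt (σ⁻¹) (one_lt_two (α := ℝ))
    refine ⟨j, ?_⟩
    have h1 : dlen (j+1) ≤ dlen j := dlen_anti (Nat.le_succ j)
    have h2 : dlen j < σ := by
      rw [dlen, inv_lt_comm₀ (by positivity) hσpos]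
      exact hj
    linarith
  set k := Nat.find hexk with hk
  have hk1 : dlen (k + 1) < σ := Nat.find_spec hexk
  have hk2 : σ ≤ dlen k := by
    rcases Nat.eq_zero_or_pos k with h0 | h0
    · rw [h0, dlen_zero]; linarith
    · obtain ⟨j, hj⟩ := Nat.exists_eq_add_of_lt h0
      have := Nat.find_min hexk (by omega : j < k)
      push_neg at this
      have he : j + 1 = k := by omega
      rw [← he]
      exact this
  have hklt : dlen k < 2 * σ := by
    have := dlen_succ k
    linarith
  have htσ : 0 < t - 2 * σ := by linarith
  set m₀ := ⌊(t - 2 * σ) * 2 ^ k⌋₊ with hm₀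
  have hp2 : (0:ℝ) < 2 ^ k := by positivity
  have hσ2k : σ * 2 ^ k ≤ 1 := by
    have := mul_le_mul_of_nonneg_right hk2 hp2.le
    rwa [dlen_mul] at this
  have hmaps : ∀ n ∈ I, ⌊a n * 2 ^ k⌋₊ ∈ Finset.Icc m₀ (m₀ + 4) := by
    intro n hn
    have habs := abs_le.mp (hall n hn)
    have hlow : t - 2 * σ ≤ a n := by linarith [habs.2]
    have hhigh : a n ≤ t + 2 * σ := by linarith [habs.1]
    rw [Finset.mem_Icc]
    constructor
    · exact Nat.floor_le_floor (mul_le_mul_of_nonneg_right hlow hp2.le)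
    · have h5 : a n * 2 ^ k < (m₀ : ℝ) + 5 := by
        have hfl : (t - 2*σ) * 2 ^ k < (m₀ : ℝ) + 1 := Nat.lt_floor_add_one _
        have : a n * 2 ^ k ≤ (t - 2*σ) * 2 ^ k + 4 * (σ * 2 ^ k) := by nlinarith
        linarith
      have : ⌊a n * 2 ^ k⌋₊ < m₀ + 5 := by
        rw [Nat.floor_lt (mul_nonneg (ha n) hp2.le)]
        push_cast
        linarith
      omega
  have hfib : ∑ j ∈ Finset.Icc m₀ (m₀ + 4),
      ∑ n ∈ I.filter (fun n => ⌊a n * 2 ^ k⌋₊ = j), h n = σ :=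
    Finset.sum_fiberwise_of_maps_to hmaps h
  have hexj : ∃ j ∈ Finset.Icc m₀ (m₀ + 4),
      σ / 5 ≤ ∑ n ∈ I.filter (fun n => ⌊a n * 2 ^ k⌋₊ = j), h n := by
    by_contra hcon
    push_neg at hcon
    have hlt : ∑ j ∈ Finset.Icc m₀ (m₀ + 4),
        (∑ n ∈ I.filter (fun n => ⌊a n * 2 ^ k⌋₊ = j), h n)
        < ∑ j ∈ Finset.Icc m₀ (m₀ + 4), σ / 5 :=
      Finset.sum_lt_sum_of_nonempty (by simp) (fun j hj => hcon j hj)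
    rw [hfib, Finset.sum_const, Nat.card_Icc] at hlt
    have h5 : m₀ + 4 + 1 - m₀ = 5 := by omega
    rw [h5, nsmul_eq_mul] at hlt
    push_cast at hlt
    linarith
  obtain ⟨j, _, hjfib⟩ := hexj
  have hJne : (I.filter (fun n => ⌊a n * 2 ^ k⌋₊ = j)).Nonempty := by
    by_contra hcon
    rw [Finset.not_nonempty_iff_eq_empty] at hcon
    rw [hcon, Finset.sum_empty] at hjfib
    linarith
  obtain ⟨n₁, hn₁⟩ := hJne
  have hn₁I : n₁ ∈ I := (Finset.mem_filter.mp hn₁).1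
  have hn₁J : Jmem k j (a n₁) := ⟨ha n₁, (Finset.mem_filter.mp hn₁).2⟩
  have hJmemAll : ∀ n ∈ I.filter (fun n => ⌊a n * 2 ^ k⌋₊ = j), Jmem k j (a n) :=
    fun n hn => ⟨ha n, (Finset.mem_filter.mp hn).2⟩
  have hμ : σ / 5 ≤ muJ a h k j :=
    le_trans hjfib (finsum_le_muJ hpos hsum k j _ hJmemAll)
  have hheavy : heavy a h k j := by
    unfold heavy
    linarith
  obtain ⟨k', hk'le, hmh'⟩ := heavy_to_mh hheavy
  set m' := j / 2 ^ (k - k') with hm'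
  have hanc : Jmem k' m' (a n₁) := by
    obtain ⟨hx0, hfl⟩ := hn₁J
    refine ⟨hx0, ?_⟩
    have h2 : a n₁ * 2 ^ k' = (a n₁ * 2 ^ k) / ((2 ^ (k - k') : ℕ) : ℝ) := by
      push_cast
      rw [eq_div_iff (by positivity), mul_assoc, ← pow_add]
      have he : k' + (k - k') = k := by omega
      rw [he]
    rw [h2, Nat.floor_div_natCast, hfl]
  obtain ⟨hb1, hb2⟩ := Jmem_bounds hanc
  refine ⟨(k', m'), hmh', ?_⟩
  have habs := abs_le.mp (hall n₁ hn₁I)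
  have hdk : dlen k ≤ dlen k' := dlen_anti hk'le
  have hd'pos := dlen_pos k'
  rw [abs_le]
  constructor
  · simp only
    nlinarith [habs.1, habs.2]
  · simp only
    nlinarith [habs.1, habs.2]

lemma Jmem_anc {k' k m : ℕ} (hk : k' ≤ k) {x : ℝ} (hx : Jmem k m x) :
    Jmem k' (m / 2 ^ (k - k')) x := by
  obtain ⟨hx0, hfl⟩ := hx
  refine ⟨hx0, ?_⟩
  have h2 : x * 2 ^ k' = (x * 2 ^ k) / ((2 ^ (k - k') : ℕ) : ℝ) := by
    push_cast
    rw [eq_div_iff (by positivity), mul_assoc, ← pow_add]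
    have he : k' + (k - k') = k := by omega
    rw [he]
  rw [h2, Nat.floor_div_natCast, hfl]

lemma mh_unique (hv : ℕ → ℕ → Prop) {k m k' m' : ℕ} {x : ℝ} (h1 : mh hv k m)
    (h2 : mh hv k' m') (hx1 : Jmem k m x) (hx2 : Jmem k' m' x) : (k, m) = (k', m') := by
  rcases le_total k' k with hk | hk
  · have hja := Jmem_anc hk hx1
    have hm' : m' = m / 2 ^ (k - k') := by rw [← hx2.2, ← hja.2]
    rcases eq_or_lt_of_le hk with he | hlt
    · subst he
      simp at hm'
      rw [hm']
    · exact absurd (hm' ▸ h2.1) (h1.2 k' hlt)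
  · have hja := Jmem_anc hk hx2
    have hm : m = m' / 2 ^ (k' - k) := by rw [← hx1.2, ← hja.2]
    rcases eq_or_lt_of_le hk with he | hlt
    · subst he
      simp at hm
      rw [hm]
    · exact absurd (hm ▸ h1.1) (h2.2 k hlt)

lemma mass_bound (hpos : ∀ n, 0 < h n) (hsum : Summable h) (F : Finset (ℕ × ℕ))
    (hF : ∀ p ∈ F, mh (heavy a h) p.1 p.2) :
    ∑ p ∈ F, muJ a h p.1 p.2 ≤ ∑' n, h n := by
  classical
  have hsummand : ∀ p : ℕ × ℕ, Summable (fun n => if Jmem p.1 p.2 (a n) then h n else 0) := by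
    intro p
    apply Summable.of_nonneg_of_le (fun n => ?_) (fun n => ?_) hsum
    · split; exacts [(hpos n).le, le_rfl]
    · split; exacts [le_rfl, (hpos n).le]
  have hswap : ∑ p ∈ F, muJ a h p.1 p.2
      = ∑' n, ∑ p ∈ F, (if Jmem p.1 p.2 (a n) then h n else 0) := by
    rw [Summable.tsum_finsetSum (fun p _ => hsummand p)]
    rfl
  rw [hswap]
  apply Summable.tsum_le_tsum _ _ hsum
  · intro n
    by_cases hex : ∃ p ∈ F, Jmem p.1 p.2 (a n)
    · obtain ⟨p₀, hp₀, hj₀⟩ := hex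
      have he : ∑ p ∈ F, (if Jmem p.1 p.2 (a n) then h n else 0) = h n := by
        rw [Finset.sum_eq_single_of_mem p₀ hp₀, if_pos hj₀]
        intro q hq hne
        rw [if_neg]
        intro hc
        exact hne (by
          have := mh_unique (heavy a h) (hF q hq) (hF p₀ hp₀) hc hj₀
          exact Prod.ext (congrArg Prod.fst this) (congrArg Prod.snd this))
      rw [he]
    · have he : ∑ p ∈ F, (if Jmem p.1 p.2 (a n) then h n else 0) = 0 :=
        Finset.sum_eq_zero (fun p hp => if_neg (fun hc => hex ⟨p, hp, hc⟩))
      rw [he]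
      exact (hpos n).le
  · exact summable_sum (fun p _ => hsummand p)

open MeasureTheory in
lemma exists_good (ha : ∀ n, 0 ≤ a n) (hpos : ∀ n, 0 < h n) (hsum : Summable h)
    (hS : ∑' n, h n ≤ 1/1000) (R : ℝ) (hR : 1 ≤ R) :
    ∃ t ∈ Icc R (R+1), good a h t := by
  classical
  by_contra hcon
  push_neg at hcon
  set E : ℕ × ℕ → Set ℝ := fun p =>
    if mh (heavy a h) p.1 p.2 then
      Icc ((p.2 : ℝ) * dlen p.1 - 3 * dlen p.1) ((p.2 : ℝ) * dlen p.1 + 3 * dlen p.1)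
    else ∅ with hE
  have hcover : Icc R (R+1) ⊆ ⋃ p : ℕ × ℕ, E p := by
    intro t htmem
    have ht1 : 1 ≤ t := le_trans hR (mem_Icc.mp htmem).1
    obtain ⟨p, hp, hb⟩ := bad_covered ha hpos hsum hS ht1 (hcon t htmem)
    refine mem_iUnion.mpr ⟨p, ?_⟩
    rw [hE]
    simp only
    rw [if_pos hp, mem_Icc]
    rw [abs_le] at hb
    constructor <;> linarith [hb.1, hb.2]
  have hvol : volume (⋃ p : ℕ × ℕ, E p) ≤ ENNReal.ofReal (72 * (1/1000)) := by
    calc volume (⋃ p : ℕ × ℕ, E p) ≤ ∑' p : ℕ × ℕ, volume (E p) :=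
          measure_iUnion_le E
    _ ≤ ∑' p : ℕ × ℕ, ENNReal.ofReal
          (72 * (if mh (heavy a h) p.1 p.2 then muJ a h p.1 p.2 else 0)) := by
        apply ENNReal.tsum_le_tsum
        intro p
        rw [hE]
        simp only
        by_cases hp : mh (heavy a h) p.1 p.2
        · rw [if_pos hp, if_pos hp, Real.volume_Icc]
          apply ENNReal.ofReal_le_ofReal
          have hh := hp.1
          unfold heavy at hh
          linarith
        · rw [if_neg hp, if_neg hp]
          simp
    _ ≤ ENNReal.ofReal (72 * (1/1000)) := by
        rw [ENNReal.tsum_eq_iSup_sum]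
        apply iSup_le
        intro F
        have hnn : ∀ p ∈ F, 0 ≤ 72 * (if mh (heavy a h) p.1 p.2 then muJ a h p.1 p.2 else 0) := by
          intro p _
          have : 0 ≤ (if mh (heavy a h) p.1 p.2 then muJ a h p.1 p.2 else 0) := by
            split
            · exact tsum_nonneg (fun n => by classical split; exacts [(hpos n).le, le_rfl])
            · exact le_rfl
          linarith
        rw [← ENNReal.ofReal_sum_of_nonneg hnn]
        apply ENNReal.ofReal_le_ofReal
        have he : ∑ p ∈ F, 72 * (if mh (heavy a h) p.1 p.2 then muJ a h p.1 p.2 else 0)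
            = 72 * ∑ p ∈ F.filter (fun p => mh (heavy a h) p.1 p.2), muJ a h p.1 p.2 := by
          rw [Finset.mul_sum, Finset.sum_filter]
          refine Finset.sum_congr rfl (fun p _ => ?_)
          split
          · rfl
          · exact mul_zero 72
        rw [he]
        have hmb := mass_bound hpos hsum (F.filter (fun p => mh (heavy a h) p.1 p.2))
          (fun p hp => (Finset.mem_filter.mp hp).2)
        have := le_trans hmb hS
        linarith
  have h1 : volume (Icc R (R+1)) = ENNReal.ofReal 1 := by
    rw [Real.volume_Icc]; norm_num
  have h2 : volume (Icc R (R+1)) ≤ volume (⋃ p : ℕ × ℕ, E p) := measure_mono hcover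
  rw [h1] at h2
  have h3 : ENNReal.ofReal 1 ≤ ENNReal.ofReal (72 * (1/1000)) := le_trans h2 hvol
  rw [ENNReal.ofReal_le_ofReal_iff (by norm_num)] at h3
  norm_num at h3

end S6

set_option maxHeartbeats 1600000 in
/-- Given the counting bound `#{n : |ζ n| ≤ r} ≤ C(1+r²)` and `δ > 0`,
there exist `c > 0` and a countable collection of pairwise disjoint open discs covering
`{ζ n}` such that every `s` outside the union of the discs satisfies
`|s − ζ n| ≥ c·(1+|s|²)^{−(2+δ)/2}` for all `n`. -/
theorem stmt6 (ζ : ℕ → ℂ) (C : ℝ) (hC : 0 < C)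
    (hcount : ∀ r : ℝ, 0 ≤ r → {n : ℕ | ‖ζ n‖ ≤ r}.Finite ∧
      ({n : ℕ | ‖ζ n‖ ≤ r}.ncard : ℝ) ≤ C * (1 + r ^ 2))
    (δ : ℝ) (hδ : 0 < δ) :
    ∃ c : ℝ, 0 < c ∧ ∃ (z : ℕ → ℂ) (r : ℕ → ℝ),
      (Pairwise fun i j : ℕ =>
        Disjoint (Metric.ball (z i) (r i)) (Metric.ball (z j) (r j))) ∧
      Set.range ζ ⊆ ⋃ j : ℕ, Metric.ball (z j) (r j) ∧
      ∀ s : ℂ, s ∉ ⋃ j : ℕ, Metric.ball (z j) (r j) →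
        ∀ n : ℕ, c * (1 + ‖s‖ ^ 2) ^ (-(2 + δ) / 2) ≤ ‖s - ζ n‖ := by
  classical
  set q : ℝ := (2 + δ) / 2 with hq
  have hq1 : 1 < q := by rw [hq]; linarith
  have hq0 : (0:ℝ) ≤ q := by linarith
  have hsum0 : Summable (fun n => ((1 + ‖ζ n‖ ^ 2) ^ q)⁻¹) :=
    summable_weights ζ C hC hcount q hq1
  set M₀ := ∑' n, ((1 + ‖ζ n‖ ^ 2) ^ q)⁻¹ with hM₀
  have hM₀0 : 0 ≤ M₀ := tsum_nonneg (fun n => by positivity)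
  set ε : ℝ := (1/1000) / (M₀ + 1) with hε
  have hεpos : 0 < ε := by rw [hε]; positivity
  set w : ℕ → ℝ := fun n => ε * ((1 + ‖ζ n‖ ^ 2) ^ q)⁻¹ with hw
  have hwpos : ∀ n, 0 < w n := fun n => by
    have : (0:ℝ) < 1 + ‖ζ n‖ ^ 2 := by positivity
    rw [hw]
    have := Real.rpow_pos_of_pos this q
    positivity
  have hwsum : Summable w := hsum0.mul_left ε
  have hwS : ∑' n, w n ≤ 1/1000 := by
    rw [hw, tsum_mul_left, ← hM₀]
    calc ε * M₀ ≤ ε * (M₀ + 1) := by nlinarith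
    _ = 1/1000 := by rw [hε]; field_simp
  set a : ℕ → ℝ := fun n => ‖ζ n‖ with haa
  have ha0 : ∀ n, 0 ≤ a n := fun n => norm_nonneg _
  -- cut points
  have hcut : ∀ k : ℕ, ∃ u ∈ Icc (2*(k:ℝ) + 2) (2*(k:ℝ) + 2 + 1), S6.good a w u := by
    intro k
    apply S6.exists_good ha0 hwpos hwsum hwS
    have : (0:ℝ) ≤ (k:ℝ) := Nat.cast_nonneg k
    linarith
  choose t' ht'mem ht'good using hcut
  set t : ℕ → ℝ := fun k => if k = 0 then -1 else t' (k - 1) with ht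
  have ht0 : t 0 = -1 := by simp [ht]
  have htsucc : ∀ k, t (k + 1) = t' k := by intro k; rw [ht]; simp
  have ht'lb : ∀ k : ℕ, 2*(k:ℝ) + 2 ≤ t' k := fun k => (ht'mem k).1
  have ht'ub : ∀ k : ℕ, t' k ≤ 2*(k:ℝ) + 3 := fun k => by
    have := (ht'mem k).2; linarith
  have htlt : ∀ k, t k < t (k + 1) := by
    intro k
    cases k with
    | zero =>
      rw [ht0, htsucc]
      have := ht'lb 0
      push_cast at this
      linarith
    | succ j =>
      rw [htsucc, htsucc]
      have h1 := ht'ub j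
      have h2 := ht'lb (j + 1)
      push_cast at h1 h2
      linarith
  have htmono : StrictMono t := strictMono_nat_of_lt_succ htlt
  have htpos : ∀ k, 0 ≤ t (k + 1) := by
    intro k
    rw [htsucc]
    have h1 := ht'lb k
    have h2 : (0:ℝ) ≤ (k:ℝ) := Nat.cast_nonneg k
    linarith
  -- regions
  have hfin : ∀ k, {n : ℕ | t k < a n ∧ a n < t (k + 1)}.Finite := by
    intro k
    exact ((hcount (t (k + 1)) (htpos k)).1).subset (fun n hn => le_of_lt hn.2)
  set Fk : ℕ → Finset ℕ := fun k => (hfin k).toFinset with hFk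
  have hFkmem : ∀ k n, n ∈ Fk k ↔ (t k < a n ∧ a n < t (k + 1)) := by
    intro k n
    rw [hFk, Set.Finite.mem_toFinset]
    rfl
  -- every atom is in some region
  have hregion : ∀ n, ∃ k, n ∈ Fk k := by
    intro n
    have hex : ∃ k : ℕ, a n < t (k + 1) := by
      refine ⟨⌈a n⌉₊, ?_⟩
      rw [htsucc]
      have h1 : a n ≤ (⌈a n⌉₊ : ℝ) := Nat.le_ceil _
      have h2 := ht'lb ⌈a n⌉₊
      linarith
    set k₀ := Nat.find hex with hk₀
    have hk₀spec : a n < t (k₀ + 1) := Nat.find_spec hex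
    refine ⟨k₀, (hFkmem k₀ n).mpr ⟨?_, hk₀spec⟩⟩
    by_cases h0 : k₀ = 0
    · rw [h0, ht0]
      have := ha0 n
      linarith
    · obtain ⟨j, hj⟩ := Nat.exists_eq_succ_of_ne_zero h0
      have hmin := Nat.find_min hex (show j < k₀ by omega)
      push_neg at hmin
      have hne : a n ≠ t (j + 1) := by
        obtain ⟨m, hm, hlt⟩ := ht'good j {n} (Finset.singleton_nonempty n)
        rw [Finset.mem_singleton] at hm
        subst hm
        rw [Finset.sum_singleton] at hlt
        intro hcon
        rw [htsucc] at hcon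
        rw [hcon, sub_self, abs_zero] at hlt
        linarith [hwpos m]
      rw [hj]
      exact lt_of_le_of_ne hmin (Ne.symm hne)
  -- apply cartan per region
  have hcart : ∀ k, ∃ T : Finset (ℂ × ℝ × Finset ℕ), (∀ x ∈ T, inv3 ζ w (Fk k) x) ∧
      ((T : Set (ℂ × ℝ × Finset ℕ)).Pairwise fun x y =>
        Disjoint (ball x.1 x.2.1) (ball y.1 y.2.1)) ∧
      ∀ x ∈ (Fk k).image (fun n => (ζ n, w n, ({n} : Finset ℕ))), ∃ y ∈ T,
        ball x.1 x.2.1 ⊆ ball y.1 y.2.1 ∧ x.2.2 ⊆ y.2.2 := by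
    intro k
    apply cartan ζ w (Fk k) ((Fk k).image (fun n => (ζ n, w n, ({n} : Finset ℕ)))).card _ le_rfl
    · intro x hx
      rw [Finset.mem_image] at hx
      obtain ⟨n, hn, rfl⟩ := hx
      exact ⟨Finset.singleton_nonempty n, Finset.singleton_subset_iff.mpr hn,
        le_of_eq (Finset.sum_singleton w n).symm,
        fun m hm => by rw [Finset.mem_singleton] at hm; subst hm; exact subset_rfl⟩
    · intro x hx y hy hxy
      rw [Finset.mem_coe, Finset.mem_image] at hx hy
      obtain ⟨n, hn, rfl⟩ := hx
      obtain ⟨m, hm, rfl⟩ := hy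
      have hnm : n ≠ m := fun hc => hxy (by rw [hc])
      simp only
      exact Finset.disjoint_singleton.mpr (by simpa using hnm)
  choose T hT1 hT2 hT3 using hcart
  -- confinement of output balls in annuli
  have hconf : ∀ k, ∀ x ∈ T k, ∀ p ∈ ball x.1 x.2.1, t k < ‖p‖ ∧ ‖p‖ < t (k + 1) := by
    intro k x hx p hp
    obtain ⟨hne, hsubP, hrad, hballs⟩ := hT1 k x hx
    obtain ⟨n₁, hn₁⟩ := hne
    have hζn₁ : ζ n₁ ∈ ball x.1 x.2.1 := hballs n₁ hn₁ (mem_ball_self (hwpos n₁))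
    have hn₁F := (hFkmem k n₁).mp (hsubP hn₁)
    have hdiam : ∀ u v : ℂ, u ∈ ball x.1 x.2.1 → v ∈ ball x.1 x.2.1 →
        dist u v < 2 * ∑ m ∈ x.2.2, w m := by
      intro u v hu hv
      rw [mem_ball] at hu hv
      calc dist u v ≤ dist u x.1 + dist x.1 v := dist_triangle _ _ _
      _ < x.2.1 + x.2.1 := by rw [dist_comm x.1 v]; linarith
      _ ≤ 2 * ∑ m ∈ x.2.2, w m := by linarith
    have hcross : ∀ τ : ℝ, S6.good a w τ → ¬ (∃ y ∈ ball x.1 x.2.1, ‖y‖ = τ) := by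
      rintro τ hgood ⟨y, hy, hyn⟩
      obtain ⟨m, hm, hlt⟩ := hgood x.2.2 ⟨n₁, hn₁⟩
      have hζm : ζ m ∈ ball x.1 x.2.1 := hballs m hm (mem_ball_self (hwpos m))
      have h1 : |a m - τ| ≤ ‖ζ m - y‖ := by
        rw [← hyn]
        exact abs_norm_sub_norm_le _ _
      have h2 : ‖ζ m - y‖ < 2 * ∑ m ∈ x.2.2, w m := by
        rw [← dist_eq_norm]
        exact hdiam _ _ hζm hy
      linarith
    constructor
    · by_contra hcon
      push_neg at hcon
      cases k with
      | zero =>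
        rw [ht0] at hcon
        have := norm_nonneg p
        linarith
      | succ j =>
        apply hcross (t (j+1)) (by rw [htsucc]; exact ht'good j)
        have hc : Continuous fun u : ℝ => ‖p + u • (ζ n₁ - p)‖ :=
          (continuous_const.add (continuous_id.smul continuous_const)).norm
        have hiv := intermediate_value_Icc (zero_le_one (α := ℝ)) hc.continuousOn
        have hmem : t (j+1) ∈ Icc (‖p + (0:ℝ) • (ζ n₁ - p)‖) (‖p + (1:ℝ) • (ζ n₁ - p)‖) := by
          simp only [zero_smul, add_zero, one_smul]
          constructor
          · exact hcon
          · have he : p + (ζ n₁ - p) = ζ n₁ := by ring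
            rw [he]
            exact le_of_lt hn₁F.1
        obtain ⟨u, hu01, hu⟩ := hiv hmem
        refine ⟨p + u • (ζ n₁ - p), ?_, hu⟩
        have hseg : p + u • (ζ n₁ - p) ∈ segment ℝ p (ζ n₁) := by
          rw [segment_eq_image']
          exact ⟨u, hu01, rfl⟩
        exact (convex_ball x.1 x.2.1).segment_subset hp hζn₁ hseg
    · by_contra hcon
      push_neg at hcon
      apply hcross (t (k+1)) (by rw [htsucc]; exact ht'good k)
      have hc : Continuous fun u : ℝ => ‖ζ n₁ + u • (p - ζ n₁)‖ :=
        (continuous_const.add (continuous_id.smul continuous_const)).norm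
      have hiv := intermediate_value_Icc (zero_le_one (α := ℝ)) hc.continuousOn
      have hmem : t (k+1) ∈ Icc (‖ζ n₁ + (0:ℝ) • (p - ζ n₁)‖) (‖ζ n₁ + (1:ℝ) • (p - ζ n₁)‖) := by
        simp only [zero_smul, add_zero, one_smul]
        constructor
        · exact le_of_lt hn₁F.2
        · have he : ζ n₁ + (p - ζ n₁) = p := by ring
          rw [he]
          exact hcon
      obtain ⟨u, hu01, hu⟩ := hiv hmem
      refine ⟨ζ n₁ + u • (p - ζ n₁), ?_, hu⟩
      have hseg : ζ n₁ + u • (p - ζ n₁) ∈ segment ℝ (ζ n₁) p := by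
        rw [segment_eq_image']
        exact ⟨u, hu01, rfl⟩
      exact (convex_ball x.1 x.2.1).segment_subset hζn₁ hp hseg
  -- annuli disjointness
  have hannuli : ∀ k k' : ℕ, k < k' → ∀ x ∈ T k, ∀ y ∈ T k',
      Disjoint (ball x.1 x.2.1) (ball y.1 y.2.1) := by
    intro k k' hkk x hx y hy
    rw [Set.disjoint_left]
    intro p hpx hpy
    have h1 := (hconf k x hx p hpx).2
    have h2 := (hconf k' y hy p hpy).1
    have h3 : t (k+1) ≤ t k' := htmono.monotone (Nat.succ_le_of_lt hkk)
    linarith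
  -- global family
  set g : ℕ → ℂ × ℝ × Finset ℕ := fun i =>
    ((T (Nat.unpair i).1).toList).getD (Nat.unpair i).2 (0, 0, ∅) with hg
  have hempty : ∀ i, ((T (Nat.unpair i).1).toList).length ≤ (Nat.unpair i).2 →
      ball (g i).1 (g i).2.1 = ∅ := by
    intro i hi
    have he : g i = (0, 0, ∅) := by rw [hg]; exact List.getD_eq_default _ _ hi
    rw [he]
    exact Metric.ball_eq_empty.mpr le_rfl
  have hvalid : ∀ i (hh : (Nat.unpair i).2 < ((T (Nat.unpair i).1).toList).length),
      g i = ((T (Nat.unpair i).1).toList)[(Nat.unpair i).2] ∧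
        g i ∈ T (Nat.unpair i).1 := by
    intro i hh
    have he : g i = ((T (Nat.unpair i).1).toList)[(Nat.unpair i).2] := by
      rw [hg]; exact List.getD_eq_getElem _ _ hh
    refine ⟨he, ?_⟩
    rw [he]
    exact Finset.mem_toList.mp (List.getElem_mem hh)
  have hunpair_inj : ∀ i j : ℕ, Nat.unpair i = Nat.unpair j → i = j := by
    intro i j hu
    rw [← Nat.pair_unpair i, ← Nat.pair_unpair j, hu]
  -- coverage key
  have hkey : ∀ n : ℕ, ∃ i : ℕ, ball (ζ n) (w n) ⊆ ball (g i).1 (g i).2.1 := by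
    intro n
    obtain ⟨k, hk⟩ := hregion n
    have hximg : (ζ n, w n, ({n} : Finset ℕ)) ∈
        (Fk k).image (fun n => (ζ n, w n, ({n} : Finset ℕ))) :=
      Finset.mem_image_of_mem _ hk
    obtain ⟨y, hyT, hsub, _⟩ := hT3 k _ hximg
    obtain ⟨idx, hlt, hidx⟩ := List.mem_iff_getElem.mp (Finset.mem_toList.mpr hyT)
    refine ⟨Nat.pair k idx, ?_⟩
    have hgi : g (Nat.pair k idx) = y := by
      rw [hg]
      simp only [Nat.unpair_pair]
      rw [List.getD_eq_getElem _ _ hlt]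
      exact hidx
    rw [hgi]
    exact hsub
  refine ⟨min 1 (ε * ((8:ℝ) ^ q)⁻¹), ?_, fun i => (g i).1, fun i => (g i).2.1, ?_, ?_, ?_⟩
  · have h8q : (0:ℝ) < (8:ℝ) ^ q := Real.rpow_pos_of_pos (by norm_num) q
    have : (0:ℝ) < ε * ((8:ℝ) ^ q)⁻¹ := by positivity
    exact lt_min one_pos this
  · -- pairwise disjoint
    intro i j hij
    simp only
    by_cases hi : (Nat.unpair i).2 < ((T (Nat.unpair i).1).toList).length
    · by_cases hj : (Nat.unpair j).2 < ((T (Nat.unpair j).1).toList).length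
      · obtain ⟨hgi, hgiT⟩ := hvalid i hi
        obtain ⟨hgj, hgjT⟩ := hvalid j hj
        rcases Nat.lt_trichotomy (Nat.unpair i).1 (Nat.unpair j).1 with hkk | hkk | hkk
        · exact hannuli _ _ hkk (g i) hgiT (g j) hgjT
        · -- same region
          have hne2 : (Nat.unpair i).2 ≠ (Nat.unpair j).2 := by
            intro hc
            exact hij (hunpair_inj i j (Prod.ext hkk hc))
          have hj' : (Nat.unpair j).2 < ((T (Nat.unpair i).1).toList).length := by
            rw [hkk]; exact hj
          have hgj' : g j = ((T (Nat.unpair i).1).toList)[(Nat.unpair j).2] := by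
            rw [hgj]
            congr 1 <;> rw [hkk]
          have hxne : g i ≠ g j := by
            rw [hgi, hgj']
            intro hc
            exact hne2 (((Finset.nodup_toList _).getElem_inj_iff).mp hc)
          have hgjT' : g j ∈ T (Nat.unpair i).1 := by rw [hkk]; exact hgjT
          exact hT2 (Nat.unpair i).1 (Finset.mem_coe.mpr hgiT) (Finset.mem_coe.mpr hgjT') hxne
        · exact (hannuli _ _ hkk (g j) hgjT (g i) hgiT).symm
      · rw [hempty j (le_of_not_gt hj)]
        exact disjoint_bot_right
    · rw [hempty i (le_of_not_gt hi)]
      exact disjoint_bot_left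
  · -- coverage of range
    rintro s ⟨n, rfl⟩
    obtain ⟨i, hsub⟩ := hkey n
    exact mem_iUnion.mpr ⟨i, hsub (mem_ball_self (hwpos n))⟩
  · -- the lower bound
    intro s hs n
    have hsn : w n ≤ ‖s - ζ n‖ := by
      obtain ⟨i, hsub⟩ := hkey n
      have hnot : s ∉ ball (ζ n) (w n) := fun hc => hs (mem_iUnion.mpr ⟨i, hsub hc⟩)
      rw [mem_ball, not_lt, dist_eq_norm] at hnot
      exact hnot
    have hbase : (0:ℝ) < 1 + ‖s‖ ^ 2 := by positivity
    have hrw : (1 + ‖s‖ ^ 2) ^ (-(2 + δ) / 2) = ((1 + ‖s‖ ^ 2) ^ q)⁻¹ := by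
      rw [show -(2 + δ) / 2 = -q by rw [hq]; ring, Real.rpow_neg hbase.le]
    rw [hrw]
    have h5 : (0:ℝ) < (1 + ‖s‖ ^ 2) ^ q := Real.rpow_pos_of_pos hbase q
    by_cases hcase : ‖ζ n‖ ≤ 2 * ‖s‖ + 1
    · have h8 : 1 + ‖ζ n‖ ^ 2 ≤ 8 * (1 + ‖s‖ ^ 2) := by
        nlinarith [norm_nonneg s, norm_nonneg (ζ n),
          mul_self_le_mul_self (norm_nonneg (ζ n)) hcase, sq_nonneg (‖s‖ - 1)]
      have h2 : (1 + ‖ζ n‖ ^ 2) ^ q ≤ (8 * (1 + ‖s‖ ^ 2)) ^ q :=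
        Real.rpow_le_rpow (by positivity) h8 hq0
      have h3 : (8 * (1 + ‖s‖ ^ 2)) ^ q = 8 ^ q * (1 + ‖s‖ ^ 2) ^ q :=
        Real.mul_rpow (by norm_num) hbase.le
      have h4 : (0:ℝ) < (1 + ‖ζ n‖ ^ 2) ^ q := Real.rpow_pos_of_pos (by positivity) q
      have h8q : (0:ℝ) < (8:ℝ) ^ q := Real.rpow_pos_of_pos (by norm_num) q
      calc min 1 (ε * ((8:ℝ)^q)⁻¹) * ((1 + ‖s‖ ^ 2) ^ q)⁻¹
          ≤ (ε * ((8:ℝ)^q)⁻¹) * ((1 + ‖s‖ ^ 2) ^ q)⁻¹ :=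
            mul_le_mul_of_nonneg_right (min_le_right _ _) (by positivity)
      _ = ε * (8 ^ q * (1 + ‖s‖ ^ 2) ^ q)⁻¹ := by rw [mul_inv]; ring
      _ ≤ ε * ((1 + ‖ζ n‖ ^ 2) ^ q)⁻¹ := by
            apply mul_le_mul_of_nonneg_left _ hεpos.le
            apply inv_anti₀ h4 (h3 ▸ h2)
      _ = w n := rfl
      _ ≤ ‖s - ζ n‖ := hsn
    · push_neg at hcase
      have h1 : 1 ≤ ‖s - ζ n‖ := by
        have hns := norm_sub_norm_le (ζ n) s
        rw [norm_sub_rev] at hns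
        linarith [norm_nonneg s]
      have hb1 : (1:ℝ) ≤ (1 + ‖s‖^2) ^ q := by
        calc (1:ℝ) = 1 ^ q := (Real.one_rpow q).symm
        _ ≤ (1 + ‖s‖^2) ^ q :=
              Real.rpow_le_rpow (by norm_num) (by nlinarith [sq_nonneg ‖s‖]) hq0
      have h2 : ((1 + ‖s‖ ^ 2) ^ q)⁻¹ ≤ 1 := by
        rw [inv_le_one_iff₀]
        right; exact hb1
      calc min 1 (ε * ((8:ℝ)^q)⁻¹) * ((1 + ‖s‖ ^ 2) ^ q)⁻¹
          ≤ 1 * 1 := by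
            apply mul_le_mul (min_le_left _ _) h2 (by positivity) (by norm_num)
      _ = 1 := one_mul 1
      _ ≤ ‖s - ζ n‖ := h1
end

section
/- Let ζ : ℕ → ℂ with ζ(n) ≠ 0 for all n and #{n : |ζ(n)| ≤ r} ≤ C(1+r²) for all r ≥ 0, let P(s) = ∏_n (1 − s/ζ(n))·exp(s/ζ(n) + s²/(2ζ(n)²)), and let δ > 0, c > 0. Then there exists C′ > 0 such that for every s ∈ ℂ satisfying |s − ζ(n)| ≥ c·⟨s⟩^{−2−δ} for all n, where ⟨s⟩ = (1+|s|²)^{1/2}, one has |P′(s)/P(s)| ≤ C′·⟨s⟩^{4+δ}. -/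
open scoped BigOperators

set_option maxHeartbeats 1000000

private lemma neg_inv_div (ζ w : ℂ) (hζ : ζ ≠ 0) :
    -ζ⁻¹ / (1 - w / ζ) = (w - ζ)⁻¹ := by
  have h0 : (1:ℂ) - w / ζ = -(w - ζ) / ζ := by field_simp; ring
  rw [h0, div_div_eq_mul_div, div_neg, neg_mul, inv_mul_cancel₀ hζ, neg_div, neg_neg,
    one_div]

private lemma two_cancel (ζ w : ℂ) : 2 * w ^ 1 / (2 * ζ ^ 2) = w / ζ ^ 2 := by
  rw [pow_one, mul_div_mul_left _ _ (two_ne_zero)]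

/-- Bound for the genus-2 Weierstrass log factor. -/
private lemma log_factor_bound {z : ℂ} (hz : ‖z‖ ≤ 1 / 2) :
    ‖Complex.log (1 - z) + z + z ^ 2 / 2‖ ≤ ‖z‖ ^ 3 := by
  have hz1 : ‖(-z)‖ < 1 := by rw [norm_neg]; linarith
  have h := Complex.norm_log_sub_logTaylor_le 2 hz1
  have hT : Complex.logTaylor (2 + 1) (-z) = -z - z ^ 2 / 2 := by
    simp only [Complex.logTaylor, Finset.sum_range_succ, Finset.sum_range_zero]
    norm_num
    ring
  rw [show (1 : ℂ) + -z = 1 - z by ring, hT] at h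
  have heq : Complex.log (1 - z) + z + z ^ 2 / 2 = Complex.log (1 - z) - (-z - z ^ 2 / 2) := by
    ring
  rw [heq]
  rw [norm_neg] at h
  refine h.trans ?_
  have h1 : (1 - ‖z‖)⁻¹ ≤ 2 := by
    rw [inv_le_comm₀ (by linarith) (by norm_num)]
    linarith
  have h6 : ‖z‖ ^ (2 + 1) * (1 - ‖z‖)⁻¹ ≤ ‖z‖ ^ (2 + 1) * 2 :=
    mul_le_mul_of_nonneg_left h1 (by positivity)
  have h5 : ((2:ℕ):ℝ) + 1 = 3 := by norm_num
  rw [h5, show (2 + 1) = 3 from rfl] at *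
  linarith [pow_nonneg (norm_nonneg z) 3]

/-- Dyadic counting estimate: finite sums of `‖ζ n‖⁻³` over indices with `‖ζ n‖ > 2`
are bounded by `10 C`. -/
private lemma dyadic_sum (ζ : ℕ → ℂ) (C : ℝ) (hC0 : 0 ≤ C)
    (hcount : ∀ r : ℝ, 0 ≤ r → {n : ℕ | ‖ζ n‖ ≤ r}.Finite ∧
      ({n : ℕ | ‖ζ n‖ ≤ r}.ncard : ℝ) ≤ C * (1 + r ^ 2))
    (u : Finset ℕ) (hu : ∀ n ∈ u, 2 < ‖ζ n‖) :
    ∑ n ∈ u, ‖ζ n‖⁻¹ ^ 3 ≤ 10 * C := by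
  classical
  set k : ℕ → ℕ := fun n => ⌊Real.logb 2 ‖ζ n‖⌋₊ with hk
  have key : ∀ n ∈ u, (2 : ℝ) ^ (k n) ≤ ‖ζ n‖ ∧ ‖ζ n‖ ≤ 2 ^ (k n + 1) := by
    intro n hn
    have h2 : (2 : ℝ) < ‖ζ n‖ := hu n hn
    have hpos : (0 : ℝ) < ‖ζ n‖ := by linarith
    have hlogb : (2 : ℝ) ^ Real.logb 2 ‖ζ n‖ = ‖ζ n‖ :=
      Real.rpow_logb (by norm_num) (by norm_num) hpos
    have hlognn : 0 ≤ Real.logb 2 ‖ζ n‖ :=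
      Real.logb_nonneg one_lt_two (by linarith)
    constructor
    · calc (2 : ℝ) ^ (k n) = (2 : ℝ) ^ ((k n : ℝ)) := (Real.rpow_natCast 2 (k n)).symm
        _ ≤ (2 : ℝ) ^ Real.logb 2 ‖ζ n‖ :=
            Real.rpow_le_rpow_of_exponent_le one_le_two (Nat.floor_le hlognn)
        _ = ‖ζ n‖ := hlogb
    · calc ‖ζ n‖ = (2 : ℝ) ^ Real.logb 2 ‖ζ n‖ := hlogb.symm
        _ ≤ (2 : ℝ) ^ ((k n : ℝ) + 1) :=
            Real.rpow_le_rpow_of_exponent_le one_le_two (Nat.lt_floor_add_one _).le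
        _ = (2 : ℝ) ^ (k n + 1) := by
            rw [show ((k n : ℝ) + 1) = ((k n + 1 : ℕ) : ℝ) by push_cast; ring,
              Real.rpow_natCast]
  have hfib := Finset.sum_fiberwise_of_maps_to (t := u.image k)
    (fun n hn => Finset.mem_image_of_mem k hn) (fun n => ‖ζ n‖⁻¹ ^ 3)
  rw [← hfib]
  have inner : ∀ j ∈ u.image k,
      ∑ n ∈ u.filter (fun n => k n = j), ‖ζ n‖⁻¹ ^ 3 ≤ 5 * C * (1 / 2) ^ j := by
    intro j _
    have hterm : ∀ n ∈ u.filter (fun n => k n = j), ‖ζ n‖⁻¹ ^ 3 ≤ (((2 : ℝ) ^ j) ^ 3)⁻¹ := by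
      intro n hn
      rw [Finset.mem_filter] at hn
      have h1 : (2 : ℝ) ^ j ≤ ‖ζ n‖ := hn.2 ▸ (key n hn.1).1
      have h2 : (0 : ℝ) < (2 : ℝ) ^ j := by positivity
      rw [← inv_pow]
      exact pow_le_pow_left₀ (by positivity) (inv_anti₀ h2 h1) 3
    have hcard : ((u.filter (fun n => k n = j)).card : ℝ)
        ≤ C * (1 + ((2 : ℝ) ^ (j + 1)) ^ 2) := by
      have hsub : (↑(u.filter (fun n => k n = j)) : Set ℕ)
          ⊆ {n | ‖ζ n‖ ≤ (2 : ℝ) ^ (j + 1)} := by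
        intro n hn
        simp only [Finset.coe_filter, Set.mem_setOf_eq] at hn ⊢
        exact hn.2 ▸ (key n hn.1).2
      have hfin := (hcount ((2 : ℝ) ^ (j + 1)) (by positivity)).1
      have h2 := (hcount ((2 : ℝ) ^ (j + 1)) (by positivity)).2
      have h3 := Set.ncard_le_ncard hsub hfin
      rw [Set.ncard_coe_finset] at h3
      calc ((u.filter (fun n => k n = j)).card : ℝ)
          ≤ ({n | ‖ζ n‖ ≤ (2 : ℝ) ^ (j + 1)}.ncard : ℝ) := by exact_mod_cast h3
        _ ≤ C * (1 + ((2 : ℝ) ^ (j + 1)) ^ 2) := h2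
    calc ∑ n ∈ u.filter (fun n => k n = j), ‖ζ n‖⁻¹ ^ 3
        ≤ (u.filter (fun n => k n = j)).card • (((2 : ℝ) ^ j) ^ 3)⁻¹ :=
          Finset.sum_le_card_nsmul _ _ _ hterm
      _ = ((u.filter (fun n => k n = j)).card : ℝ) * (((2 : ℝ) ^ j) ^ 3)⁻¹ := by
          rw [nsmul_eq_mul]
      _ ≤ C * (1 + ((2 : ℝ) ^ (j + 1)) ^ 2) * (((2 : ℝ) ^ j) ^ 3)⁻¹ := by
          gcongr
      _ ≤ 5 * C * (1 / 2) ^ j := by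
          rw [mul_inv_le_iff₀ (by positivity)]
          have e1 : ((2 : ℝ) ^ (j + 1)) ^ 2 = 4 * 4 ^ j := by
            rw [← pow_mul, show (j + 1) * 2 = 2 * j + 2 by ring, pow_add, pow_mul]
            norm_num [mul_comm]
          have e2 : (1 / 2 : ℝ) ^ j * ((2 : ℝ) ^ j) ^ 3 = 4 ^ j := by
            rw [div_pow, one_pow, ← pow_mul, show j * 3 = j + 2 * j by ring, pow_add,
              pow_mul, one_div, inv_mul_cancel_left₀ (by positivity : ((2:ℝ) ^ j) ≠ 0)]
            norm_num
          have h4 : (1 : ℝ) ≤ 4 ^ j := one_le_pow₀ (by norm_num)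
          calc C * (1 + ((2 : ℝ) ^ (j + 1)) ^ 2) = C * (1 + 4 * 4 ^ j) := by rw [e1]
            _ ≤ C * (5 * 4 ^ j) := by nlinarith
            _ = 5 * C * ((1 / 2 : ℝ) ^ j * ((2 : ℝ) ^ j) ^ 3) := by rw [e2]; ring
            _ = 5 * C * (1 / 2) ^ j * ((2 : ℝ) ^ j) ^ 3 := by ring
  calc ∑ j ∈ u.image k, ∑ n ∈ u.filter (fun n => k n = j), ‖ζ n‖⁻¹ ^ 3
      ≤ ∑ j ∈ u.image k, 5 * C * (1 / 2) ^ j := Finset.sum_le_sum inner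
    _ = 5 * C * ∑ j ∈ u.image k, (1 / 2 : ℝ) ^ j := by rw [Finset.mul_sum]
    _ ≤ 5 * C * 2 := by
        have := (Summable.sum_le_tsum (u.image k) (fun i _ => by positivity)
          summable_geometric_two).trans (le_of_eq tsum_geometric_two)
        have h5 : (0:ℝ) ≤ 5 * C := by linarith
        exact mul_le_mul_of_nonneg_left this h5
    _ = 10 * C := by ring

/-- Under the counting bound `#{n : |ζ n| ≤ r} ≤ C(1+r²)`, with
`P(s) = ∏ (1 − s/ζ n)·exp(s/ζ n + s²/(2 ζ n²))` and `δ, c > 0`, there is `C′ > 0` such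
that every `s` with `|s − ζ n| ≥ c⟨s⟩^{−2−δ}` for all `n` (where `⟨s⟩ = (1+|s|²)^{1/2}`)
satisfies `|P′(s)/P(s)| ≤ C′⟨s⟩^{4+δ}`. -/
theorem stmt7 (ζ : ℕ → ℂ) (hζ : ∀ n, ζ n ≠ 0) (C : ℝ) (hC : 0 < C)
    (hcount : ∀ r : ℝ, 0 ≤ r → {n : ℕ | ‖ζ n‖ ≤ r}.Finite ∧
      ({n : ℕ | ‖ζ n‖ ≤ r}.ncard : ℝ) ≤ C * (1 + r ^ 2))
    (δ c : ℝ) (hδ : 0 < δ) (hc : 0 < c)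
    (P : ℂ → ℂ)
    (hP : ∀ s : ℂ, P s = ∏' n : ℕ,
      (1 - s / ζ n) * Complex.exp (s / ζ n + s ^ 2 / (2 * ζ n ^ 2))) :
    ∃ C' : ℝ, 0 < C' ∧ ∀ s : ℂ,
      (∀ n : ℕ, c * Real.sqrt (1 + ‖s‖ ^ 2) ^ (-2 - δ) ≤ ‖s - ζ n‖) →
      ‖deriv P s / P s‖ ≤ C' * Real.sqrt (1 + ‖s‖ ^ 2) ^ (4 + δ) := by
  classical
  -- the factor functions
  set f : ℕ → ℂ → ℂ := fun n w =>
    (1 - w / ζ n) * Complex.exp (w / ζ n + w ^ 2 / (2 * ζ n ^ 2)) with hfdef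
  set l : ℕ → ℂ → ℂ := fun n w =>
    Complex.log (1 - w / ζ n) + (w / ζ n + w ^ 2 / (2 * ζ n ^ 2)) with hldef
  have hPf : ∀ w : ℂ, P w = ∏' n : ℕ, f n w := fun w => hP w
  -- uniform bound on `‖ζ n‖⁻¹`
  obtain ⟨M, hM1, hM⟩ : ∃ M : ℝ, 1 ≤ M ∧ ∀ n, ‖ζ n‖⁻¹ ≤ M := by
    set F := (hcount 1 zero_le_one).1.toFinset with hF
    refine ⟨1 + ∑ n ∈ F, ‖ζ n‖⁻¹,
      le_add_of_nonneg_right (Finset.sum_nonneg fun i _ => by positivity), fun n => ?_⟩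
    have hsumnn : (0:ℝ) ≤ ∑ n ∈ F, ‖ζ n‖⁻¹ := Finset.sum_nonneg fun i _ => by positivity
    by_cases hn : ‖ζ n‖ ≤ 1
    · have hnF : n ∈ F := by rw [hF, Set.Finite.mem_toFinset]; exact hn
      have := Finset.single_le_sum (f := fun m => ‖ζ m‖⁻¹) (fun i _ => by positivity) hnF
      linarith
    · push_neg at hn
      have : ‖ζ n‖⁻¹ ≤ 1 := by rw [inv_le_one_iff₀]; right; exact hn.le
      linarith
  have hCpos : (0:ℝ) < 17 * C * (c⁻¹ + M + M ^ 2) + 20 * C + 1 := by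
    have h1 : (0:ℝ) < c⁻¹ := inv_pos.2 hc
    have h2 : (0:ℝ) < c⁻¹ + M + M ^ 2 := by nlinarith
    have h3 := mul_pos (by linarith : (0:ℝ) < 17 * C) h2
    linarith
  refine ⟨17 * C * (c⁻¹ + M + M ^ 2) + 20 * C + 1, hCpos, fun s hs => ?_⟩
  -- basic quantities
  set A := Real.sqrt (1 + ‖s‖ ^ 2) with hA
  have hA1 : 1 ≤ A := by
    rw [hA]
    have h := Real.sqrt_le_sqrt (show (1:ℝ) ≤ 1 + ‖s‖ ^ 2 by linarith [sq_nonneg ‖s‖])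
    rwa [Real.sqrt_one] at h
  have hA0 : 0 < A := lt_of_lt_of_le one_pos hA1
  have hsA : ‖s‖ ≤ A := by
    have h := Real.sqrt_le_sqrt (show ‖s‖ ^ 2 ≤ 1 + ‖s‖ ^ 2 by linarith)
    rwa [Real.sqrt_sq (norm_nonneg s)] at h
  have hrpow_pos : (0 : ℝ) < A ^ (-2 - δ) := Real.rpow_pos_of_pos hA0 _
  have hdist : ∀ n, 0 < ‖s - ζ n‖ := fun n =>
    lt_of_lt_of_le (by positivity) (hs n)
  have hsne : ∀ n, s - ζ n ≠ 0 := fun n => by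
    intro h; have h2 := hdist n; rw [h, norm_zero] at h2; exact lt_irrefl _ h2
  have h1sne : ∀ n, (1 : ℂ) - s / ζ n ≠ 0 := fun n h => hsne n (by
    rw [sub_eq_zero, eq_comm, div_eq_one_iff_eq (hζ n)] at h
    rw [h, sub_self])
  have hfsne : ∀ n, f n s ≠ 0 := fun n =>
    mul_ne_zero (h1sne n) (Complex.exp_ne_zero _)
  -- radius and domain
  set R := ‖s‖ + 1 with hR
  have hR1 : (1:ℝ) ≤ R := by rw [hR]; linarith [norm_nonneg s]
  have hR0 : (0:ℝ) < R := by linarith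
  have hsR : ‖s‖ < R := by rw [hR]; linarith
  have hRA : R ≤ 2 * A := by rw [hR]; linarith
  set U := Metric.ball (0:ℂ) R with hU
  have hUopen : IsOpen U := Metric.isOpen_ball
  have hwU : ∀ w ∈ U, ‖w‖ < R := fun w hw => by
    rwa [hU, Metric.mem_ball, dist_zero_right] at hw
  have hsU : s ∈ U := by rw [hU, Metric.mem_ball, dist_zero_right]; exact hsR
  -- the finite set of nearby zeros
  set T : Finset ℕ := (hcount (2*R) (by positivity)).1.toFinset with hT
  have hmemT : ∀ n, n ∈ T ↔ ‖ζ n‖ ≤ 2*R := fun n => Set.Finite.mem_toFinset _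
  have hTc : ∀ n, n ∉ T → 2*R < ‖ζ n‖ := fun n hn =>
    lt_of_not_ge (fun h => hn ((hmemT n).2 h))
  have hTcard : (T.card : ℝ) ≤ 17 * C * A^2 := by
    have h2 := (hcount (2*R) (by positivity)).2
    have h3 : ({n | ‖ζ n‖ ≤ 2*R} : Set ℕ).ncard = T.card := by
      rw [hT, ← Set.ncard_coe_finset, Set.Finite.coe_toFinset]
    rw [h3] at h2
    have h4 : (1 + (2*R)^2) ≤ 17 * A^2 := by nlinarith
    nlinarith
  -- basic facts off T
  have hoff : ∀ n, n ∉ T → ∀ w ∈ U, ‖w / ζ n‖ ≤ 1/2 ∧ ‖w / ζ n‖ < 1 := by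
    intro n hn w hw
    have hz := hTc n hn
    have hζpos : (0:ℝ) < ‖ζ n‖ := by linarith
    have hle : ‖w / ζ n‖ ≤ 1/2 := by
      rw [norm_div, div_le_iff₀ hζpos]
      have := (hwU w hw).le
      linarith
    exact ⟨hle, lt_of_le_of_lt hle (by norm_num)⟩
  have hne1U : ∀ n, n ∉ T → ∀ w ∈ U, (1:ℂ) - w / ζ n ≠ 0 := by
    intro n hn w hw h
    have h2 := (hoff n hn w hw).2
    rw [sub_eq_zero] at h
    rw [← h, norm_one] at h2
    exact lt_irrefl _ h2
  -- the index set of far zeros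
  set S : Set ℕ := (↑T : Set ℕ)ᶜ with hS
  have hSmem : ∀ n : S, (n : ℕ) ∉ T := fun n => n.2
  -- summability facts
  have hfin3 : ∀ v : Finset S, ∑ x ∈ v, ‖ζ (x : ℕ)‖⁻¹ ^ 3 ≤ 10 * C := by
    intro v
    refine le_trans (le_of_eq ?_)
      (dyadic_sum ζ C hC.le hcount (v.map (Function.Embedding.subtype _)) ?_)
    · exact (Finset.sum_map v (Function.Embedding.subtype _) (fun n => ‖ζ n‖⁻¹ ^ 3)).symm
    · intro n hn
      rw [Finset.mem_map] at hn
      obtain ⟨x, _, rfl⟩ := hn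
      have h1 : 2 * R < ‖ζ ((Function.Embedding.subtype _) x)‖ := hTc _ (hSmem x)
      linarith
  have hinvsum : Summable (fun n : S => ‖ζ (n:ℕ)‖⁻¹ ^ 3) :=
    summable_of_sum_le (fun n => by positivity) hfin3
  have hinvtsum : ∑' n : S, ‖ζ (n:ℕ)‖⁻¹ ^ 3 ≤ 10 * C := Summable.tsum_le_of_sum_le hinvsum hfin3
  set u0 : ℕ → ℝ := fun n => R ^ 3 * ‖ζ n‖⁻¹ ^ 3 with hu0
  have hu0sum : Summable (fun n : S => u0 (n:ℕ)) := by
    rw [hu0]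
    exact hinvsum.mul_left (R ^ 3)
  -- bound on the log factors
  have harg : ∀ (n : ℕ) (w : ℂ), w ^ 2 / (2 * ζ n ^ 2) = (w / ζ n) ^ 2 / 2 := by
    intro n w
    rw [div_pow, div_div, mul_comm (ζ n ^ 2) 2]
  have hlbound : ∀ (n : ℕ), n ∉ T → ∀ w ∈ U, ‖l n w‖ ≤ u0 n := by
    intro n hn w hw
    have h12 := (hoff n hn w hw).1
    have hlw : l n w = Complex.log (1 - w / ζ n) + (w / ζ n) + (w / ζ n) ^ 2 / 2 := by
      rw [hldef]
      simp only [harg n w]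
      ring
    rw [hlw]
    refine (log_factor_bound h12).trans ?_
    rw [hu0]
    have hζpos : (0:ℝ) < ‖ζ n‖ := by
      have := hTc n hn; linarith
    have h1 : ‖w / ζ n‖ ≤ R * ‖ζ n‖⁻¹ := by
      rw [norm_div, div_eq_mul_inv]
      gcongr
      exact (hwU w hw).le
    calc ‖w / ζ n‖ ^ 3 ≤ (R * ‖ζ n‖⁻¹) ^ 3 := pow_le_pow_left₀ (norm_nonneg _) h1 3
      _ = R ^ 3 * ‖ζ n‖⁻¹ ^ 3 := by ring
  -- derivative of the log factors
  have hd1 : ∀ (n : ℕ) (w : ℂ), HasDerivAt (fun w : ℂ => 1 - w / ζ n) (-(ζ n)⁻¹) w := by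
    intro n w
    simpa using ((hasDerivAt_id w).div_const (ζ n)).const_sub 1
  have hd2 : ∀ (n : ℕ) (w : ℂ), HasDerivAt (fun w : ℂ => w / ζ n + w ^ 2 / (2 * ζ n ^ 2))
      ((ζ n)⁻¹ + 2 * w ^ 1 / (2 * ζ n ^ 2)) w := by
    intro n w
    have ha := (hasDerivAt_id w).div_const (ζ n)
    have hb := (hasDerivAt_pow 2 w).div_const (2 * ζ n ^ 2)
    simpa using ha.fun_add hb
  have hld : ∀ (n : ℕ) (w : ℂ), ‖w / ζ n‖ < 1 →
      HasDerivAt (l n) ((w - ζ n)⁻¹ + ((ζ n)⁻¹ + w / ζ n ^ 2)) w := by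
    intro n w hw1
    have hsp : (1 : ℂ) - w / ζ n ∈ Complex.slitPlane := by
      have := Complex.mem_slitPlane_of_norm_lt_one (z := -(w / ζ n)) (by rwa [norm_neg])
      simpa [sub_eq_add_neg] using this
    have h4 := ((hd1 n w).clog hsp).add (hd2 n w)
    rw [neg_inv_div _ _ (hζ n), two_cancel] at h4
    exact h4
  have hldiffU : ∀ n : S, DifferentiableOn ℂ (l (n:ℕ)) U := fun n => fun w hw =>
    ((hld (n:ℕ) w ((hoff _ (hSmem n) w hw).2)).differentiableAt).differentiableWithinAt
  have hlleU : ∀ (i : S), ∀ w ∈ U, ‖l (i:ℕ) w‖ ≤ u0 (i:ℕ) := fun i w hw =>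
    hlbound _ (hSmem i) w hw
  -- the tail sum of logs
  set g : ℂ → ℂ := fun w => ∑' n : S, l (n:ℕ) w with hg
  have hgdiff : DifferentiableOn ℂ g U :=
    Complex.differentiableOn_tsum_of_summable_norm hu0sum hldiffU hUopen hlleU
  have hgsum := Complex.hasSum_deriv_of_summable_norm hu0sum hldiffU hUopen hlleU hsU
  -- the term values
  set E : ℕ → ℂ := fun n => (s - ζ n)⁻¹ + ((ζ n)⁻¹ + s / ζ n ^ 2) with hE
  have hderivl : ∀ n : S, deriv (l (n:ℕ)) s = E (n:ℕ) := fun n =>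
    (hld _ s ((hoff _ (hSmem n) s hsU).2)).deriv
  have hgE : HasSum (fun n : S => E (n:ℕ)) (deriv g s) := by
    have h := hgsum
    rw [show (fun i : S => deriv (l (i:ℕ)) s) = fun i : S => E (i:ℕ) from
      funext hderivl] at h
    exact h
  -- exp of log factors
  have hexpl : ∀ (n : ℕ), n ∉ T → ∀ w ∈ U, Complex.exp (l n w) = f n w := by
    intro n hn w hw
    rw [hldef, hfdef]
    simp only
    rw [Complex.exp_add, Complex.exp_log (hne1U n hn w hw)]
  have hlsum : ∀ w ∈ U, Summable (fun n : S => l (n:ℕ) w) := fun w hw =>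
    Summable.of_norm_bounded hu0sum (fun i => hlleU i w hw)
  have htail : ∀ w ∈ U, HasProd (fun n : S => f (n:ℕ) w) (Complex.exp (g w)) := by
    intro w hw
    have h := (hlsum w hw).hasSum.cexp
    rw [show (Complex.exp ∘ fun n : S => l (n:ℕ) w) = fun n : S => f (n:ℕ) w from
      funext fun n => hexpl _ (hSmem n) w hw] at h
    exact h
  have hhp : ∀ w ∈ U, HasProd (fun n => f n w)
      ((∏ n ∈ T, f n w) * Complex.exp (g w)) := by
    intro w hw
    exact HasProd.mul_compl (T.hasProd (fun n => f n w)) (htail w hw)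
  set Q : ℂ → ℂ := fun w => (∏ n ∈ T, f n w) * Complex.exp (g w) with hQ
  have hPQ : ∀ w ∈ U, P w = Q w := by
    intro w hw
    rw [hPf w, hQ]
    exact (hhp w hw).tprod_eq
  have hPQev : deriv P s = deriv Q s :=
    Filter.EventuallyEq.deriv_eq
      (Filter.eventuallyEq_of_mem (hUopen.mem_nhds hsU) (fun w hw => hPQ w hw))
  have hgds : DifferentiableAt ℂ g s := hgdiff.differentiableAt (hUopen.mem_nhds hsU)
  -- differentiability and logDeriv of individual factors
  have hfd : ∀ n, DifferentiableAt ℂ (f n) s := fun n =>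
    ((hd1 n s).mul ((hd2 n s).cexp)).differentiableAt
  have hlogf : ∀ n, logDeriv (f n) s = E n := by
    intro n
    rw [hfdef]
    simp only
    rw [logDeriv_mul (f := fun w => 1 - w / ζ n)
      (g := fun w => Complex.exp (w / ζ n + w ^ 2 / (2 * ζ n ^ 2))) s (h1sne n)
      (Complex.exp_ne_zero _) (hd1 n s).differentiableAt ((hd2 n s).cexp.differentiableAt)]
    rw [logDeriv_apply, logDeriv_apply, (hd1 n s).deriv, ((hd2 n s).cexp).deriv, hE]
    simp only
    rw [mul_comm (Complex.exp _), mul_div_assoc, div_self (Complex.exp_ne_zero _), mul_one,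
      neg_inv_div _ _ (hζ n), two_cancel]
  have hprodne : (∏ n ∈ T, f n s) ≠ 0 := Finset.prod_ne_zero_iff.2 (fun n _ => hfsne n)
  have hproddiff : DifferentiableAt ℂ (fun w => ∏ n ∈ T, f n w) s :=
    DifferentiableAt.fun_finsetProd (fun i _ => hfd i)
  -- the key identity
  have hkey : deriv P s / P s = (∑ n ∈ T, E n) + deriv g s := by
    have hPs : P s = Q s := hPQ s hsU
    rw [hPQev, hPs, show deriv Q s / Q s = logDeriv Q s from (logDeriv_apply _ _).symm, hQ]
    rw [logDeriv_mul (f := fun w => ∏ n ∈ T, f n w) (g := fun w => Complex.exp (g w)) s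
      hprodne (Complex.exp_ne_zero _) hproddiff (DifferentiableAt.cexp hgds)]
    congr 1
    · rw [logDeriv_prod (s := T) (f := f) (x := s) (fun n _ => hfsne n) (fun n _ => hfd n)]
      exact Finset.sum_congr rfl (fun n _ => hlogf n)
    · have hgd : HasDerivAt g (deriv g s) s := hgds.hasDerivAt
      rw [logDeriv_apply, (hgd.cexp).deriv, mul_comm, mul_div_assoc,
        div_self (Complex.exp_ne_zero _), mul_one]
  -- near bound
  have hA2δ : (1:ℝ) ≤ A ^ ((2:ℝ) + δ) := by
    have := Real.rpow_le_rpow_of_exponent_le hA1 (show (0:ℝ) ≤ 2 + δ by linarith)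
    rwa [Real.rpow_zero] at this
  have hAle : A ≤ A ^ ((2:ℝ) + δ) := by
    have := Real.rpow_le_rpow_of_exponent_le hA1 (show (1:ℝ) ≤ 2 + δ by linarith)
    rwa [Real.rpow_one] at this
  have hEnear : ∀ n ∈ T, ‖E n‖ ≤ c⁻¹ * A ^ ((2:ℝ) + δ) + (M + A * M ^ 2) := by
    intro n _
    rw [hE]
    simp only
    refine (norm_add_le _ _).trans (add_le_add ?_ ((norm_add_le _ _).trans (add_le_add ?_ ?_)))
    · rw [norm_inv]
      have h2 : (c * A ^ (-2 - δ))⁻¹ = c⁻¹ * A ^ ((2:ℝ) + δ) := by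
        rw [mul_inv, ← Real.rpow_neg hA0.le, show -(-2 - δ) = (2:ℝ) + δ by ring]
      calc ‖s - ζ n‖⁻¹ ≤ (c * A ^ (-2 - δ))⁻¹ :=
            inv_anti₀ (by positivity) (hs n)
        _ = c⁻¹ * A ^ ((2:ℝ) + δ) := h2
    · rw [norm_inv]; exact hM n
    · rw [norm_div, norm_pow, div_eq_mul_inv, ← inv_pow]
      exact mul_le_mul hsA (pow_le_pow_left₀ (by positivity) (hM n) 2) (by positivity) hA0.le
  have hB0 : (0:ℝ) ≤ c⁻¹ * A ^ ((2:ℝ) + δ) + (M + A * M ^ 2) := by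
    have h1 : (0:ℝ) ≤ c⁻¹ := (inv_pos.2 hc).le
    nlinarith [Real.rpow_pos_of_pos hA0 ((2:ℝ) + δ)]
  have hA42 : A ^ (2:ℕ) * A ^ ((2:ℝ) + δ) = A ^ ((4:ℝ) + δ) := by
    rw [← Real.rpow_natCast A 2, ← Real.rpow_add hA0,
      show ((2:ℕ):ℝ) + ((2:ℝ) + δ) = (4:ℝ) + δ by push_cast; ring]
  have hnear : ∑ n ∈ T, ‖E n‖ ≤ 17 * C * (c⁻¹ + M + M ^ 2) * A ^ ((4:ℝ) + δ) := by
    have h1 := Finset.sum_le_card_nsmul T _ _ hEnear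
    rw [nsmul_eq_mul] at h1
    have h2 : (T.card : ℝ) * (c⁻¹ * A ^ ((2:ℝ) + δ) + (M + A * M ^ 2))
        ≤ 17 * C * A ^ 2 * (c⁻¹ * A ^ ((2:ℝ) + δ) + (M + A * M ^ 2)) :=
      mul_le_mul_of_nonneg_right hTcard hB0
    have hBle : c⁻¹ * A ^ ((2:ℝ) + δ) + (M + A * M ^ 2)
        ≤ (c⁻¹ + M + M ^ 2) * A ^ ((2:ℝ) + δ) := by nlinarith [sq_nonneg M]
    have h3 : 17 * C * A ^ 2 * (c⁻¹ * A ^ ((2:ℝ) + δ) + (M + A * M ^ 2))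
        ≤ 17 * C * A ^ 2 * ((c⁻¹ + M + M ^ 2) * A ^ ((2:ℝ) + δ)) := by
      apply mul_le_mul_of_nonneg_left hBle
      positivity
    have h4 : 17 * C * A ^ 2 * ((c⁻¹ + M + M ^ 2) * A ^ ((2:ℝ) + δ))
        = 17 * C * (c⁻¹ + M + M ^ 2) * A ^ ((4:ℝ) + δ) := by
      rw [← hA42]; ring
    linarith
  -- far bound
  have hEfar : ∀ n : S, ‖E (n:ℕ)‖ ≤ 2 * A ^ 2 * ‖ζ (n:ℕ)‖⁻¹ ^ 3 := by
    intro n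
    have hn := hSmem n
    have hζR := hTc _ hn
    have hζpos : (0:ℝ) < ‖ζ (n:ℕ)‖ := by linarith
    have hEeq : E (n:ℕ) = s ^ 2 / (ζ (n:ℕ) ^ 2 * (s - ζ (n:ℕ))) := by
      have hz1 := hζ (n:ℕ)
      have hz2 := hsne (n:ℕ)
      rw [hE]
      simp only
      field_simp
      ring
    have hlow : ‖ζ (n:ℕ)‖ / 2 ≤ ‖s - ζ (n:ℕ)‖ := by
      have h1 : ‖ζ (n:ℕ)‖ - ‖s‖ ≤ ‖s - ζ (n:ℕ)‖ := by
        rw [norm_sub_rev]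
        exact norm_sub_norm_le _ _
      linarith
    rw [hEeq, norm_div, norm_mul, norm_pow, norm_pow]
    calc ‖s‖ ^ 2 / (‖ζ (n:ℕ)‖ ^ 2 * ‖s - ζ (n:ℕ)‖)
        ≤ ‖s‖ ^ 2 / (‖ζ (n:ℕ)‖ ^ 2 * (‖ζ (n:ℕ)‖ / 2)) := by
          gcongr
      _ = 2 * ‖s‖ ^ 2 * ‖ζ (n:ℕ)‖⁻¹ ^ 3 := by
          field_simp
      _ ≤ 2 * A ^ 2 * ‖ζ (n:ℕ)‖⁻¹ ^ 3 := by
          gcongr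
  have hEsumnorm : Summable (fun n : S => ‖E (n:ℕ)‖) :=
    Summable.of_nonneg_of_le (fun _ => norm_nonneg _) hEfar (hinvsum.mul_left (2 * A ^ 2))
  have htailbound : ‖deriv g s‖ ≤ 20 * C * A ^ 2 := by
    rw [← hgE.tsum_eq]
    refine (norm_tsum_le_tsum_norm hEsumnorm).trans ?_
    calc ∑' n : S, ‖E (n:ℕ)‖ ≤ ∑' n : S, 2 * A ^ 2 * ‖ζ (n:ℕ)‖⁻¹ ^ 3 :=
          Summable.tsum_le_tsum hEfar hEsumnorm (hinvsum.mul_left _)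
      _ = 2 * A ^ 2 * ∑' n : S, ‖ζ (n:ℕ)‖⁻¹ ^ 3 := tsum_mul_left
      _ ≤ 2 * A ^ 2 * (10 * C) := mul_le_mul_of_nonneg_left hinvtsum (by positivity)
      _ = 20 * C * A ^ 2 := by ring
  -- conclusion
  have hA24 : A ^ (2:ℕ) ≤ A ^ ((4:ℝ) + δ) := by
    have h := Real.rpow_le_rpow_of_exponent_le hA1 (show (2:ℝ) ≤ 4 + δ by linarith)
    rwa [show A ^ (2:ℝ) = A ^ (2:ℕ) by rw [← Real.rpow_natCast A 2]; norm_num] at h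
  have hfinal : ‖deriv P s / P s‖ ≤
      (17 * C * (c⁻¹ + M + M ^ 2) + 20 * C + 1) * A ^ ((4:ℝ) + δ) := by
    rw [hkey]
    have hApos : (0:ℝ) < A ^ ((4:ℝ) + δ) := Real.rpow_pos_of_pos hA0 _
    calc ‖(∑ n ∈ T, E n) + deriv g s‖ ≤ ‖∑ n ∈ T, E n‖ + ‖deriv g s‖ := norm_add_le _ _
      _ ≤ (∑ n ∈ T, ‖E n‖) + ‖deriv g s‖ := by
          gcongr
          exact norm_sum_le _ _
      _ ≤ 17 * C * (c⁻¹ + M + M ^ 2) * A ^ ((4:ℝ) + δ) + 20 * C * A ^ 2 :=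
          add_le_add hnear htailbound
      _ ≤ 17 * C * (c⁻¹ + M + M ^ 2) * A ^ ((4:ℝ) + δ) + 20 * C * A ^ ((4:ℝ) + δ) := by
          have := mul_le_mul_of_nonneg_left hA24 (show (0:ℝ) ≤ 20 * C by linarith)
          linarith
      _ ≤ (17 * C * (c⁻¹ + M + M ^ 2) + 20 * C + 1) * A ^ ((4:ℝ) + δ) := by nlinarith
  exact hfinal
end

section
/- Let μ > 0, a₀, a₁ ∈ ℂ, and let h : (0,∞) → ℂ be measurable with |h(t) − a₀/t − a₁| ≤ C·t for t ∈ (0,1] and |h(t)| ≤ C·e^{−μt} for t ≥ 1 (for some C > 0). Fix z ∈ ℂ with Re(z) > −μ. Then the function G(w) = ∫₀^∞ t^{w−1} e^{−tz} h(t) dt is defined by an absolutely convergent integral for Re(w) > 1, and extends to a meromorphic function on {Re(w) > −1} whose only possible poles are simple: one at w = 1 with residue a₀ and one at w = 0 with residue a₁ − a₀·z. Consequently w ↦ G(w)/Γ(w) extends holomorphically to a neighborhood of w = 0. -/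
open MeasureTheory Set

set_option maxHeartbeats 2000000

/-- Let `μ > 0`, `a₀, a₁ ∈ ℂ`, and let `h` be measurable with
`|h(t) − a₀/t − a₁| ≤ C t` on `(0,1]` and `|h(t)| ≤ C e^{−μt}` for `t ≥ 1`.  Fix `z`
with `Re z > −μ`.  Then `G(w) = ∫₀^∞ t^{w−1} e^{−tz} h(t) dt` converges absolutely for
`Re w > 1` and extends meromorphically to `{Re w > −1}` with only possible simple poles
at `w = 1` (residue `a₀`) and `w = 0` (residue `a₁ − a₀z`); consequently `G(w)/Γ(w)`
extends holomorphically to a neighborhood of `w = 0`. -/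
theorem stmt12 (μ : ℝ) (hμ : 0 < μ) (a₀ a₁ : ℂ) (h : ℝ → ℂ) (hmeas : Measurable h)
    (C : ℝ) (hC : 0 < C)
    (hsmall : ∀ t : ℝ, 0 < t → t ≤ 1 → ‖h t - a₀ / (t : ℂ) - a₁‖ ≤ C * t)
    (hlarge : ∀ t : ℝ, 1 ≤ t → ‖h t‖ ≤ C * Real.exp (-μ * t))
    (z : ℂ) (hz : -μ < z.re) :
    (∀ w : ℂ, 1 < w.re →
      IntegrableOn (fun t : ℝ =>
        (t : ℂ) ^ (w - 1) * Complex.exp (-(t : ℂ) * z) * h t) (Ioi 0)) ∧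
    ∃ E : ℂ → ℂ, DifferentiableOn ℂ E {w : ℂ | -1 < w.re} ∧
      (∀ w : ℂ, 1 < w.re →
        ∫ t in Ioi (0 : ℝ), (t : ℂ) ^ (w - 1) * Complex.exp (-(t : ℂ) * z) * h t =
          a₀ / (w - 1) + (a₁ - a₀ * z) / w + E w) ∧
      ∃ F : ℂ → ℂ, AnalyticAt ℂ F 0 ∧
        ∀ w : ℂ, -1 < w.re → w ≠ 0 → w ≠ 1 →
          F w = (a₀ / (w - 1) + (a₁ - a₀ * z) / w + E w) / Complex.Gamma w := by
  have hε : 0 < μ + z.re := by linarith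
  set c : ℂ := a₁ - a₀ * z with hc_def
  set φ : ℝ → ℂ := fun t => Complex.exp (-(t : ℂ) * z) * h t with hφ_def
  set g : ℝ → ℂ := fun t =>
    if 0 < t then (if t ≤ 1 then φ t - a₀ / (t : ℂ) - c else φ t) else 0 with hg_def
  have hre : |z.re| ≤ ‖z‖ := by
    exact Complex.abs_re_le_norm z
  -- norm of the exponential factor
  have hexp_norm : ∀ t : ℝ, ‖Complex.exp (-(t : ℂ) * z)‖ = Real.exp (-(t * z.re)) := by
    intro t
    rw [Complex.norm_exp]
    congr 1
    simp [Complex.mul_re]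
  -- measurability
  have hφm : Measurable φ := by
    apply Measurable.mul _ hmeas
    exact Complex.measurable_exp.comp (Complex.measurable_ofReal.neg.mul_const z)
  have hgm : Measurable g := by
    apply Measurable.ite (measurableSet_lt measurable_const measurable_id) _ measurable_const
    apply Measurable.ite (measurableSet_le measurable_id measurable_const) _ hφm
    exact (hφm.sub (measurable_const.div Complex.measurable_ofReal)).sub measurable_const
  -- a norm computation used repeatedly
  have hdivnorm : ∀ t : ℝ, 0 < t → ‖a₀ / (t : ℂ)‖ = ‖a₀‖ * (1 / t) := by
    intro t ht0
    rw [norm_div, Complex.norm_real, Real.norm_eq_abs, abs_of_pos ht0,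
      mul_one_div]
  -- bound for h on (0,1]
  have hh_bound : ∀ t : ℝ, 0 < t → t ≤ 1 → ‖h t‖ ≤ C + ‖a₀‖ * (1 / t) + ‖a₁‖ := by
    intro t ht0 ht1
    have tri : ‖h t‖ ≤ ‖h t - a₀ / (t : ℂ) - a₁‖ + ‖a₀ / (t : ℂ)‖ + ‖a₁‖ := by
      have hrw : h t = (h t - a₀ / (t : ℂ) - a₁) + a₀ / (t : ℂ) + a₁ := by ring
      calc ‖h t‖ = ‖(h t - a₀ / (t : ℂ) - a₁) + a₀ / (t : ℂ) + a₁‖ := by rw [← hrw]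
        _ ≤ _ := norm_add₃_le
    have h1 := hsmall t ht0 ht1
    have h2 := hdivnorm t ht0
    have h3 : C * t ≤ C := by nlinarith
    linarith
  -- local integrability
  have hg_loc : LocallyIntegrableOn g (Ioi 0) := by
    set M : ℝ := (Real.exp ‖z‖ + 1) * (C + ‖a₀‖ + ‖a₁‖ + ‖c‖) with hM_def
    have he1 : 1 ≤ Real.exp ‖z‖ := Real.one_le_exp (norm_nonneg z)
    have hBcont : ContinuousOn (fun t : ℝ => M * (1 + 1 / t)) (Ioi 0) := by
      apply continuousOn_const.mul
      apply continuousOn_const.add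
      exact continuousOn_const.div continuousOn_id fun t ht => ne_of_gt ht
    have hBloc : LocallyIntegrableOn (fun t : ℝ => M * (1 + 1 / t)) (Ioi 0) :=
      hBcont.locallyIntegrableOn measurableSet_Ioi
    apply hBloc.mono hgm.aestronglyMeasurable
    apply Filter.Eventually.of_forall
    intro t
    by_cases ht0 : 0 < t
    · have hBnorm : ‖M * (1 + 1 / t)‖ = M * (1 + 1 / t) := by
        rw [Real.norm_eq_abs, abs_of_nonneg (by positivity)]
      have hu : 1 ≤ 1 / t ∨ 1 < t := by
        rcases le_or_gt t 1 with h' | h'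
        · left; rw [le_div_iff₀ ht0]; linarith
        · right; exact h'
      by_cases ht1 : t ≤ 1
      · have h1t : 1 ≤ 1 / t := by rw [le_div_iff₀ ht0]; linarith
        have hgt : g t = φ t - a₀ / (t : ℂ) - c := by simp [hg_def, ht0, ht1]
        have hφt : ‖φ t‖ ≤ Real.exp ‖z‖ * (C + ‖a₀‖ * (1 / t) + ‖a₁‖) := by
          rw [show φ t = Complex.exp (-(t : ℂ) * z) * h t from rfl, norm_mul, hexp_norm t]
          apply mul_le_mul _ (hh_bound t ht0 ht1) (norm_nonneg _) (Real.exp_pos _).le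
          apply Real.exp_le_exp.mpr
          have hn1 : -(t * z.re) ≤ |t * z.re| := neg_le_abs _
          have hn2 : |t * z.re| = t * |z.re| := by rw [abs_mul, abs_of_pos ht0]
          nlinarith [abs_nonneg z.re]
        have tri : ‖φ t - a₀ / (t : ℂ) - c‖ ≤ ‖φ t‖ + ‖a₀ / (t : ℂ)‖ + ‖c‖ := by
          calc ‖φ t - a₀ / (t : ℂ) - c‖ ≤ ‖φ t - a₀ / (t : ℂ)‖ + ‖c‖ := norm_sub_le _ _
            _ ≤ ‖φ t‖ + ‖a₀ / (t : ℂ)‖ + ‖c‖ := by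
                have := norm_sub_le (φ t) (a₀ / (t : ℂ)); linarith
        rw [hgt, hBnorm]
        have hd := hdivnorm t ht0
        have hA0 : (0:ℝ) ≤ ‖a₀‖ := norm_nonneg _
        have hA1 : (0:ℝ) ≤ ‖a₁‖ := norm_nonneg _
        have hCc : (0:ℝ) ≤ ‖c‖ := norm_nonneg _
        rw [hM_def]
        nlinarith [mul_nonneg hA0 (le_trans zero_le_one h1t),
          mul_le_mul_of_nonneg_left h1t (mul_nonneg (by linarith : (0:ℝ) ≤ Real.exp ‖z‖ + 1) hCc),
          mul_le_mul_of_nonneg_left h1t (mul_nonneg (by linarith : (0:ℝ) ≤ Real.exp ‖z‖ + 1) hA1),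
          mul_le_mul_of_nonneg_left h1t (mul_nonneg (by linarith : (0:ℝ) ≤ Real.exp ‖z‖ + 1) hC.le),
          mul_le_mul_of_nonneg_left h1t hA0]
      · have hgt : g t = φ t := by simp [hg_def, ht0, ht1]
        have ht1' : 1 ≤ t := le_of_not_ge (by simpa using ht1)
        have hφt : ‖φ t‖ ≤ C := by
          rw [show φ t = Complex.exp (-(t : ℂ) * z) * h t from rfl, norm_mul, hexp_norm t]
          have h1 := hlarge t ht1'
          have h2 : Real.exp (-(t * z.re)) * ‖h t‖ ≤
              Real.exp (-(t * z.re)) * (C * Real.exp (-μ * t)) :=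
            mul_le_mul_of_nonneg_left h1 (Real.exp_pos _).le
          have h3 : Real.exp (-(t * z.re)) * (C * Real.exp (-μ * t)) =
              C * Real.exp (-(μ + z.re) * t) := by
            rw [mul_left_comm, ← Real.exp_add]
            congr 2
            ring
          have h4 : Real.exp (-(μ + z.re) * t) ≤ 1 := by
            rw [Real.exp_le_one_iff]
            nlinarith
          nlinarith [Real.exp_pos (-(μ + z.re) * t)]
        rw [hgt, hBnorm]
        have h1t : 0 < 1 / t := by positivity
        have hA0 : (0:ℝ) ≤ ‖a₀‖ := norm_nonneg _
        have hA1 : (0:ℝ) ≤ ‖a₁‖ := norm_nonneg _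
        have hCc : (0:ℝ) ≤ ‖c‖ := norm_nonneg _
        have hM0 : (0:ℝ) ≤ M := by rw [hM_def]; positivity
        have hCM : C ≤ M := by
          rw [hM_def]
          nlinarith [mul_le_mul (by linarith : (1:ℝ) ≤ Real.exp ‖z‖ + 1)
            (by linarith : C ≤ C + ‖a₀‖ + ‖a₁‖ + ‖c‖) hC.le
            (by linarith : (0:ℝ) ≤ Real.exp ‖z‖ + 1)]
        calc ‖φ t‖ ≤ C := hφt
          _ ≤ M := hCM
          _ ≤ M * (1 + 1 / t) := le_mul_of_one_le_right hM0 (by linarith)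
    · have : g t = 0 := by simp [hg_def, ht0]
      rw [this, norm_zero]
      exact norm_nonneg _
  -- exponential decay at ∞
  have hg_top : g =O[Filter.atTop] fun t => Real.exp (-(μ + z.re) * t) := by
    rw [Asymptotics.isBigO_iff]
    refine ⟨C, ?_⟩
    filter_upwards [Filter.eventually_gt_atTop 1] with t ht
    have ht0 : (0:ℝ) < t := lt_trans one_pos ht
    have hgt : g t = φ t := by simp [hg_def, ht0, not_le.mpr ht]
    rw [hgt, Real.norm_eq_abs, abs_of_pos (Real.exp_pos _)]
    calc ‖φ t‖ = Real.exp (-(t * z.re)) * ‖h t‖ := by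
          rw [show φ t = Complex.exp (-(t : ℂ) * z) * h t from rfl, norm_mul, hexp_norm t]
      _ ≤ Real.exp (-(t * z.re)) * (C * Real.exp (-μ * t)) :=
          mul_le_mul_of_nonneg_left (hlarge t ht.le) (Real.exp_pos _).le
      _ = C * Real.exp (-(μ + z.re) * t) := by
          rw [mul_left_comm, ← Real.exp_add]
          congr 2
          ring
  -- O(t) at 0
  have hg_bot : g =O[nhdsWithin 0 (Ioi 0)] fun t : ℝ => t ^ (-(-1 : ℝ)) := by
    rw [Asymptotics.isBigO_iff]
    refine ⟨3 * C + ‖a₀‖ * ‖z‖ ^ 2 + 2 * ‖a₁‖ * ‖z‖, ?_⟩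
    have hδ : 0 < min 1 (‖z‖ + 1)⁻¹ := lt_min one_pos (by positivity)
    filter_upwards [Ioc_mem_nhdsGT_of_mem (Set.mem_Ico.mpr ⟨le_refl 0, hδ⟩)] with t ht
    obtain ⟨ht0, htδ⟩ := ht
    have ht1 : t ≤ 1 := htδ.trans (min_le_left _ _)
    have htz : t * ‖z‖ ≤ 1 := by
      have h1 : t ≤ (‖z‖ + 1)⁻¹ := htδ.trans (min_le_right _ _)
      have h2 : t * ‖z‖ ≤ (‖z‖ + 1)⁻¹ * ‖z‖ := mul_le_mul_of_nonneg_right h1 (norm_nonneg z)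
      have h3 : (‖z‖ + 1)⁻¹ * ‖z‖ ≤ 1 := by
        rw [inv_mul_le_iff₀ (by positivity)]
        linarith [norm_nonneg z]
      linarith
    have htC : (t : ℂ) ≠ 0 := Complex.ofReal_ne_zero.mpr ht0.ne'
    have hgt : g t =
        Complex.exp (-(t : ℂ) * z) * (h t - a₀ / (t : ℂ) - a₁)
        + (a₀ / (t : ℂ)) * (Complex.exp (-(t : ℂ) * z) - 1 - (-(t : ℂ) * z))
        + a₁ * (Complex.exp (-(t : ℂ) * z) - 1) := by
      rw [show g t = φ t - a₀ / (t : ℂ) - c from by simp [hg_def, ht0, ht1],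
        show φ t = Complex.exp (-(t : ℂ) * z) * h t from rfl, hc_def]
      field_simp
      ring
    have huabs : ‖(-(t : ℂ) * z)‖ = t * ‖z‖ := by
      rw [norm_mul, norm_neg, Complex.norm_real, Real.norm_eq_abs, abs_of_pos ht0]
    have hexp3 : ‖Complex.exp (-(t : ℂ) * z)‖ ≤ 3 := by
      rw [hexp_norm t]
      have hn1 : -(t * z.re) ≤ |t * z.re| := neg_le_abs _
      have hn2 : |t * z.re| = t * |z.re| := by rw [abs_mul, abs_of_pos ht0]
      have hn3 : t * |z.re| ≤ t * ‖z‖ := mul_le_mul_of_nonneg_left hre ht0.le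
      calc Real.exp (-(t * z.re)) ≤ Real.exp 1 := Real.exp_le_exp.mpr (by linarith)
        _ ≤ 3 := by linarith [Real.exp_one_lt_d9.le]
    have hB1 : ‖Complex.exp (-(t : ℂ) * z) * (h t - a₀ / (t : ℂ) - a₁)‖ ≤ 3 * (C * t) := by
      rw [norm_mul]
      exact mul_le_mul hexp3 (hsmall t ht0 ht1) (norm_nonneg _) (by norm_num)
    have hB2 : ‖(a₀ / (t : ℂ)) * (Complex.exp (-(t : ℂ) * z) - 1 - (-(t : ℂ) * z))‖ ≤
        ‖a₀‖ * ‖z‖ ^ 2 * t := by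
      rw [norm_mul, hdivnorm t ht0]
      have e1 : ‖Complex.exp (-(t : ℂ) * z) - 1 - (-(t : ℂ) * z)‖ ≤ (t * ‖z‖) ^ 2 := by
        calc ‖(Complex.exp (-(t : ℂ) * z) - 1 - (-(t : ℂ) * z))‖ ≤
            ‖(-(t : ℂ) * z)‖ ^ 2 :=
              Complex.norm_exp_sub_one_sub_id_le (by rw [huabs]; exact htz)
          _ = (t * ‖z‖) ^ 2 := by rw [huabs]
      calc ‖a₀‖ * (1 / t) * ‖Complex.exp (-(t : ℂ) * z) - 1 - (-(t : ℂ) * z)‖ ≤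
          ‖a₀‖ * (1 / t) * (t * ‖z‖) ^ 2 := by
            apply mul_le_mul_of_nonneg_left e1 (by positivity)
        _ = ‖a₀‖ * ‖z‖ ^ 2 * t := by field_simp
    have hB3 : ‖a₁ * (Complex.exp (-(t : ℂ) * z) - 1)‖ ≤ ‖a₁‖ * (2 * (t * ‖z‖)) := by
      rw [norm_mul]
      refine mul_le_mul_of_nonneg_left ?_ (norm_nonneg a₁)
      calc ‖(Complex.exp (-(t : ℂ) * z) - 1)‖ ≤ 2 * ‖(-(t : ℂ) * z)‖ :=
            Complex.norm_exp_sub_one_le (by rw [huabs]; exact htz)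
        _ = 2 * (t * ‖z‖) := by rw [huabs]
    have hnr : ‖t ^ (-(-1 : ℝ))‖ = t := by
      rw [neg_neg, Real.rpow_one, Real.norm_eq_abs, abs_of_pos ht0]
    rw [hnr]
    calc ‖g t‖ ≤ ‖Complex.exp (-(t : ℂ) * z) * (h t - a₀ / (t : ℂ) - a₁)‖
          + ‖(a₀ / (t : ℂ)) * (Complex.exp (-(t : ℂ) * z) - 1 - (-(t : ℂ) * z))‖
          + ‖a₁ * (Complex.exp (-(t : ℂ) * z) - 1)‖ := by rw [hgt]; exact norm_add₃_le
      _ ≤ 3 * (C * t) + ‖a₀‖ * ‖z‖ ^ 2 * t + ‖a₁‖ * (2 * (t * ‖z‖)) := by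
          exact add_le_add (add_le_add hB1 hB2) hB3
      _ = (3 * C + ‖a₀‖ * ‖z‖ ^ 2 + 2 * ‖a₁‖ * ‖z‖) * t := by ring
  -- differentiability of the Mellin transform
  have hE : DifferentiableOn ℂ (mellin g) {w : ℂ | -1 < w.re} := by
    intro w hw
    exact (mellin_differentiableAt_of_isBigO_rpow_exp hε hg_loc hg_top hg_bot
      (by simpa using hw : (-1 : ℝ) < w.re)).differentiableWithinAt
  -- the main computation for Re w > 1
  have key : ∀ w : ℂ, 1 < w.re →
      IntegrableOn (fun t : ℝ => (t : ℂ) ^ (w - 1) * Complex.exp (-(t : ℂ) * z) * h t)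
        (Ioi 0) ∧
      ∫ t in Ioi (0 : ℝ), (t : ℂ) ^ (w - 1) * Complex.exp (-(t : ℂ) * z) * h t =
        a₀ / (w - 1) + c / w + mellin g w := by
    intro w hw
    have hconv : MellinConvergent g w :=
      mellinConvergent_of_isBigO_rpow_exp hε hg_loc hg_top hg_bot (by norm_num; linarith)
    set G₁ : ℝ → ℂ := indicator (Ioc 0 1) (fun t : ℝ => (t : ℂ) ^ (-1 : ℂ)) with hG₁_def
    set G₀ : ℝ → ℂ := indicator (Ioc 0 1) (fun t : ℝ => (t : ℂ) ^ (0 : ℂ)) with hG₀_def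
    have hM1 : HasMellin G₁ w (1 / (w + -1)) :=
      hasMellin_cpow_Ioc (-1) (by simp only [Complex.neg_re, Complex.one_re]; linarith)
    have hM0 : HasMellin G₀ w (1 / (w + 0)) :=
      hasMellin_cpow_Ioc 0 (by simp only [Complex.zero_re, add_zero]; linarith)
    have hint_g : IntegrableOn (fun t : ℝ => (t : ℂ) ^ (w - 1) * g t) (Ioi 0) := by
      have := hconv
      rw [MellinConvergent] at this
      simpa only [smul_eq_mul] using this
    have hint1 : IntegrableOn (fun t : ℝ => a₀ * ((t : ℂ) ^ (w - 1) * G₁ t)) (Ioi 0) := by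
      have := hM1.1
      rw [MellinConvergent] at this
      simp only [smul_eq_mul] at this
      exact this.const_mul a₀
    have hint0 : IntegrableOn (fun t : ℝ => c * ((t : ℂ) ^ (w - 1) * G₀ t)) (Ioi 0) := by
      have := hM0.1
      rw [MellinConvergent] at this
      simp only [smul_eq_mul] at this
      exact this.const_mul c
    have heq : EqOn (fun t : ℝ => (t : ℂ) ^ (w - 1) * Complex.exp (-(t : ℂ) * z) * h t)
        (fun t : ℝ => (t : ℂ) ^ (w - 1) * g t + a₀ * ((t : ℂ) ^ (w - 1) * G₁ t)
          + c * ((t : ℂ) ^ (w - 1) * G₀ t)) (Ioi 0) := by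
      intro t ht
      have ht0 : (0:ℝ) < t := ht
      have htC : (t : ℂ) ≠ 0 := Complex.ofReal_ne_zero.mpr ht0.ne'
      simp only
      by_cases ht1 : t ≤ 1
      · have hgt : g t = φ t - a₀ / (t : ℂ) - c := by simp [hg_def, ht0, ht1]
        have hG1 : G₁ t = ((t : ℂ))⁻¹ := by
          rw [hG₁_def, indicator_of_mem (mem_Ioc.mpr ⟨ht0, ht1⟩), Complex.cpow_neg_one]
        have hG0 : G₀ t = 1 := by
          rw [hG₀_def, indicator_of_mem (mem_Ioc.mpr ⟨ht0, ht1⟩), Complex.cpow_zero]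
        rw [hgt, hG1, hG0, show φ t = Complex.exp (-(t : ℂ) * z) * h t from rfl]
        field_simp
        ring
      · have hgt : g t = φ t := by simp [hg_def, ht0, ht1]
        have hG1 : G₁ t = 0 := by
          rw [hG₁_def, indicator_of_notMem (fun hmem => ht1 hmem.2)]
        have hG0 : G₀ t = 0 := by
          rw [hG₀_def, indicator_of_notMem (fun hmem => ht1 hmem.2)]
        rw [hgt, hG1, hG0, show φ t = Complex.exp (-(t : ℂ) * z) * h t from rfl]
        ring
    have hint_sum : IntegrableOn (fun t : ℝ =>
        (t : ℂ) ^ (w - 1) * g t + a₀ * ((t : ℂ) ^ (w - 1) * G₁ t)) (Ioi 0) :=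
      hint_g.add hint1
    constructor
    · exact IntegrableOn.congr_fun (hint_sum.add hint0) heq.symm measurableSet_Ioi
    · rw [setIntegral_congr_fun measurableSet_Ioi heq,
        integral_add hint_sum hint0, integral_add hint_g hint1,
        integral_const_mul, integral_const_mul]
      have e1 : ∫ t in Ioi (0:ℝ), (t : ℂ) ^ (w - 1) * G₁ t = 1 / (w + -1) := by
        have := hM1.2
        rw [mellin] at this
        simpa only [smul_eq_mul] using this
      have e0 : ∫ t in Ioi (0:ℝ), (t : ℂ) ^ (w - 1) * G₀ t = 1 / (w + 0) := by
        have := hM0.2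
        rw [mellin] at this
        simpa only [smul_eq_mul] using this
      have eg : ∫ t in Ioi (0:ℝ), (t : ℂ) ^ (w - 1) * g t = mellin g w := by
        rw [mellin]
        simp only [smul_eq_mul]
      rw [e1, e0, eg]
      ring
  refine ⟨fun w hw => (key w hw).1, mellin g, hE, fun w hw => (key w hw).2, ?_⟩
  -- the analytic function F
  refine ⟨fun w => (a₀ * w / (w - 1) + c + w * mellin g w) * (Complex.Gamma (w + 1))⁻¹,
    ?_, ?_⟩
  · have h1 : AnalyticAt ℂ (fun w : ℂ => a₀ * w / (w - 1)) 0 :=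
      (analyticAt_const.mul analyticAt_id).div
        (analyticAt_id.sub analyticAt_const) (by norm_num)
    have h2 : AnalyticAt ℂ (mellin g) 0 := by
      refine hE.analyticAt ?_
      exact (isOpen_lt continuous_const Complex.continuous_re).mem_nhds (by norm_num)
    have h3 : AnalyticAt ℂ (fun w : ℂ => (Complex.Gamma (w + 1))⁻¹) 0 := by
      have hd : Differentiable ℂ (fun w : ℂ => (Complex.Gamma (w + 1))⁻¹) :=
        Complex.differentiable_one_div_Gamma.comp (differentiable_id.add_const 1)
      exact hd.analyticAt 0
    exact ((h1.add analyticAt_const).add (analyticAt_id.mul h2)).mul h3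
  · intro w hw hw0 hw1
    have hΓ : Complex.Gamma w ≠ 0 := by
      apply Complex.Gamma_ne_zero
      intro m
      cases m with
      | zero => simpa using hw0
      | succ n =>
        intro hEq
        have hre' : w.re = -(n + 1 : ℕ) := by rw [hEq]; simp
        rw [hre'] at hw
        push_cast at hw
        linarith
    have hw1' : w - 1 ≠ 0 := sub_ne_zero.mpr hw1
    simp only [Complex.Gamma_add_one w hw0]
    field_simp
end
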